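/- arXiv:1902.09433 — 8 statements merged into one kernel-verified Lean document; each statement's English description precedes it below -/
import Mathlib

section
/- Let β > 0. There exist constants 0 < c ≤ C (depending only on β) such that for all v ∈ ℝ³: c·(1 + ‖v‖) ≤ λ(v) ≤ C·(1 + ‖v‖). In particular λ is bounded away from 0 and has linear growth for large ‖v‖. -/
open MeasureTheory

noncomputable section

abbrev E3 := EuclideanSpace ℝ (Fin 3)

/-- The Maxwellian density with inverse temperature `β` on `ℝ³`. -/
def Mβ (β : ℝ) (v : E3) : ℝ :=
  (β / (2 * Real.pi)) ^ ((3 : ℝ) / 2) * Real.exp (-(β / 2) * ‖v‖ ^ 2)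

/-- The collision frequency `λ(v) = π ∫ M_β(w) ‖v − w‖ dw`. -/
def lam (β : ℝ) (v : E3) : ℝ := Real.pi * ∫ w : E3, Mβ β w * ‖v - w‖

lemma integrable_gaussE3 {b : ℝ} (hb : 0 < b) :
    Integrable (fun w : E3 => Real.exp (-b * ‖w‖ ^ 2)) := by
  have h := GaussianFourier.integrable_cexp_neg_mul_sq_norm_add (V := E3) (b := (b : ℂ))
    (by simpa using hb) 0 0
  simp only [zero_mul, add_zero] at h
  have h2 := h.re
  refine h2.congr (Filter.Eventually.of_forall fun w => ?_)
  simp only [RCLike.re_to_complex]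
  rw [show (-(b : ℂ) * (‖w‖ : ℂ) ^ 2) = ((-b * ‖w‖ ^ 2 : ℝ) : ℂ) by push_cast; ring,
    ← Complex.ofReal_exp, Complex.ofReal_re]

lemma continuous_Mβ (β : ℝ) : Continuous (Mβ β) := by
  unfold Mβ
  fun_prop

lemma Mβ_pos {β : ℝ} (hβ : 0 < β) (w : E3) : 0 < Mβ β w := by
  unfold Mβ
  have : 0 < β / (2 * Real.pi) := div_pos hβ (by positivity)
  positivity

lemma integrable_Mβ {β : ℝ} (hβ : 0 < β) : Integrable (Mβ β) := by
  unfold Mβ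
  exact (integrable_gaussE3 (by linarith : (0:ℝ) < β / 2)).const_mul _

lemma integrable_Mβ_norm {β : ℝ} (hβ : 0 < β) :
    Integrable (fun w : E3 => Mβ β w * ‖w‖) := by
  have hb : (0:ℝ) < β / 4 := by linarith
  have hbase := (integrable_gaussE3 hb).const_mul
    ((β / (2 * Real.pi)) ^ ((3 : ℝ) / 2) * Real.sqrt (4 / β))
  refine hbase.mono ?_ (Filter.Eventually.of_forall fun w => ?_)
  · exact ((continuous_Mβ β).mul continuous_norm).aestronglyMeasurable
  · have hA : (0:ℝ) < (β / (2 * Real.pi)) ^ ((3 : ℝ) / 2) := by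
      have : 0 < β / (2 * Real.pi) := div_pos hβ (by positivity)
      positivity
    have hMw : 0 ≤ Mβ β w * ‖w‖ := mul_nonneg (Mβ_pos hβ w).le (norm_nonneg _)
    rw [Real.norm_eq_abs, abs_of_nonneg hMw, Real.norm_eq_abs, abs_of_nonneg (by positivity)]
    unfold Mβ
    -- key: ‖w‖ * exp(-(β/4)‖w‖²) ≤ sqrt(4/β)
    have key : ‖w‖ * Real.exp (-(β / 4) * ‖w‖ ^ 2) ≤ Real.sqrt (4 / β) := by
      set x := Real.sqrt (β / 4) * ‖w‖ with hx
      have hx0 : 0 ≤ x := mul_nonneg (Real.sqrt_nonneg _) (norm_nonneg _)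
      have hxe : x * Real.exp (-x ^ 2) ≤ 1 := by
        have h1 : x ≤ Real.exp (x ^ 2) := by
          have := Real.add_one_le_exp (x ^ 2)
          nlinarith
        have he : 0 < Real.exp (x ^ 2) := Real.exp_pos _
        rw [Real.exp_neg]
        rw [mul_inv_le_iff₀ he, one_mul]
        exact h1
      have hsq : x ^ 2 = (β / 4) * ‖w‖ ^ 2 := by
        rw [hx, mul_pow, Real.sq_sqrt (by positivity : (0:ℝ) ≤ β / 4)]
      have hs : Real.sqrt (β / 4) * Real.sqrt (4 / β) = 1 := by
        rw [← Real.sqrt_mul (by positivity)]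
        rw [show β / 4 * (4 / β) = 1 by field_simp]
        exact Real.sqrt_one
      have hsp : 0 < Real.sqrt (β / 4) := Real.sqrt_pos.mpr (by positivity)
      calc ‖w‖ * Real.exp (-(β / 4) * ‖w‖ ^ 2)
          = Real.sqrt (4 / β) * (x * Real.exp (-x ^ 2)) := by
            rw [hsq, hx]; field_simp; linear_combination (-‖w‖) * hs
        _ ≤ Real.sqrt (4 / β) * 1 := by
            exact mul_le_mul_of_nonneg_left hxe (Real.sqrt_nonneg _)
        _ = Real.sqrt (4 / β) := mul_one _
    have hsplit : Real.exp (-(β / 2) * ‖w‖ ^ 2)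
        = Real.exp (-(β / 4) * ‖w‖ ^ 2) * Real.exp (-(β / 4) * ‖w‖ ^ 2) := by
      rw [← Real.exp_add]; ring_nf
    rw [hsplit]
    have h2 := mul_le_mul_of_nonneg_left key (Real.exp_pos (-(β / 4) * ‖w‖ ^ 2)).le
    nlinarith [Real.exp_pos (-(β / 4) * ‖w‖ ^ 2), hA]

lemma integrable_Mβ_sub {β : ℝ} (hβ : 0 < β) (v : E3) :
    Integrable (fun w : E3 => Mβ β w * ‖v - w‖) := by
  have hg : Integrable (fun w : E3 => Mβ β w * ‖v‖ + Mβ β w * ‖w‖) :=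
    ((integrable_Mβ hβ).mul_const ‖v‖).add (integrable_Mβ_norm hβ)
  refine hg.mono ?_ (Filter.Eventually.of_forall fun w => ?_)
  · exact ((continuous_Mβ β).mul ((continuous_const.sub continuous_id).norm)).aestronglyMeasurable
  · have hM := (Mβ_pos hβ w).le
    have h1 : ‖v - w‖ ≤ ‖v‖ + ‖w‖ := norm_sub_le _ _
    have hnn : (0:ℝ) ≤ Mβ β w * ‖v‖ + Mβ β w * ‖w‖ :=
      add_nonneg (mul_nonneg hM (norm_nonneg _)) (mul_nonneg hM (norm_nonneg _))
    rw [Real.norm_eq_abs, abs_of_nonneg (mul_nonneg hM (norm_nonneg _)), Real.norm_eq_abs,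
      abs_of_nonneg hnn]
    nlinarith [norm_nonneg v, norm_nonneg w]

lemma integral_Mβ_smul {β : ℝ} (hβ : 0 < β) :
    ∫ w : E3, Mβ β w • w = 0 := by
  have hint : Integrable (fun w : E3 => Mβ β w • w) := by
    refine (integrable_Mβ_norm hβ).mono
      ?_ (Filter.Eventually.of_forall fun w => ?_)
    · exact ((continuous_Mβ β).smul continuous_id).aestronglyMeasurable
    · rw [norm_smul, Real.norm_eq_abs, abs_of_nonneg (Mβ_pos hβ w).le, Real.norm_eq_abs,
        abs_of_nonneg (mul_nonneg (Mβ_pos hβ w).le (norm_nonneg w))]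
  have hneg : ∫ w : E3, Mβ β w • w = ∫ w : E3, Mβ β (-w) • (-w) :=
    (integral_neg_eq_self (fun w : E3 => Mβ β w • w) volume).symm
  have heq : (fun w : E3 => Mβ β (-w) • (-w)) = fun w : E3 => -(Mβ β w • w) := by
    funext w
    simp [Mβ, norm_neg]
  rw [heq, integral_neg] at hneg
  have h2 : (2:ℝ) • (∫ w : E3, Mβ β w • w) = 0 := by
    rw [two_smul]
    nth_rewrite 1 [hneg]
    simp
  rcases smul_eq_zero.mp h2 with h | h
  · norm_num at h
  · exact h

/-- There exist constants `0 < c ≤ C` (depending only on `β`) such that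
`c·(1 + ‖v‖) ≤ λ(v) ≤ C·(1 + ‖v‖)` for all `v`: the collision frequency is bounded away
from zero and has linear growth. -/
theorem lam_linear_growth (β : ℝ) (hβ : 0 < β) :
    ∃ c C : ℝ, 0 < c ∧ c ≤ C ∧
      ∀ v : E3, c * (1 + ‖v‖) ≤ lam β v ∧ lam β v ≤ C * (1 + ‖v‖) := by
  set N := ∫ w : E3, Mβ β w with hN_def
  set K := ∫ w : E3, Mβ β w * ‖w‖ with hK_def
  have hM_int := integrable_Mβ hβ
  have hMw_int := integrable_Mβ_norm hβ
  have hN : 0 < N := by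
    rw [hN_def, integral_pos_iff_support_of_nonneg (fun w => (Mβ_pos hβ w).le) hM_int]
    have : Function.support (Mβ β) = Set.univ := by
      ext w; simp [Function.mem_support, (Mβ_pos hβ w).ne']
    rw [this]
    exact (isOpen_univ : IsOpen (Set.univ : Set E3)).measure_pos volume ⟨0, trivial⟩
  have hK : 0 < K := by
    rw [hK_def, integral_pos_iff_support_of_nonneg
      (fun w => mul_nonneg (Mβ_pos hβ w).le (norm_nonneg w)) hMw_int]
    refine lt_of_lt_of_le ?_ (measure_mono (s := ({0}ᶜ : Set E3)) ?_)
    · obtain ⟨x, hx⟩ := exists_ne (0 : E3)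
      exact (isOpen_compl_singleton).measure_pos volume ⟨x, hx⟩
    · intro w hw
      simp only [Set.mem_compl_iff, Set.mem_singleton_iff] at hw
      simp only [Function.mem_support]
      exact mul_ne_zero (Mβ_pos hβ w).ne' (norm_ne_zero_iff.mpr hw)
  refine ⟨Real.pi / 2 * min N (K / 2), Real.pi * max N K, ?_, ?_, fun v => ?_⟩
  · have := Real.pi_pos
    positivity
  · have hπ := Real.pi_pos
    have h1 : min N (K / 2) ≤ N := min_le_left _ _
    have h2 : N ≤ max N K := le_max_left _ _
    nlinarith
  · set a := ‖v‖ with ha_def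
    have ha : 0 ≤ a := norm_nonneg v
    set L := ∫ w : E3, Mβ β w * ‖v - w‖ with hL_def
    have hL_int := integrable_Mβ_sub hβ v
    have hπ := Real.pi_pos
    -- Jensen lower bound: N * a ≤ L
    have hvec_int : Integrable (fun w : E3 => Mβ β w • (v - w)) := by
      refine hL_int.mono
        ?_ (Filter.Eventually.of_forall fun w => ?_)
      · exact ((continuous_Mβ β).smul (continuous_const.sub continuous_id)).aestronglyMeasurable
      · rw [norm_smul, Real.norm_eq_abs, abs_of_nonneg (Mβ_pos hβ w).le, Real.norm_eq_abs,
          abs_of_nonneg (mul_nonneg (Mβ_pos hβ w).le (norm_nonneg _))]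
    have hw_int : Integrable (fun w : E3 => Mβ β w • w) := by
      refine hMw_int.mono
        ?_ (Filter.Eventually.of_forall fun w => ?_)
      · exact ((continuous_Mβ β).smul continuous_id).aestronglyMeasurable
      · rw [norm_smul, Real.norm_eq_abs, abs_of_nonneg (Mβ_pos hβ w).le, Real.norm_eq_abs,
          abs_of_nonneg (mul_nonneg (Mβ_pos hβ w).le (norm_nonneg w))]
    have hveq : ∫ w : E3, Mβ β w • (v - w) = N • v := by
      have : (fun w : E3 => Mβ β w • (v - w))
          = fun w : E3 => Mβ β w • v - Mβ β w • w := by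
        funext w; rw [smul_sub]
      rw [this, integral_sub (hM_int.smul_const v) hw_int, integral_Mβ_smul hβ,
        integral_smul_const, sub_zero]
    have h1 : N * a ≤ L := by
      have hle : ‖∫ w : E3, Mβ β w • (v - w)‖ ≤ ∫ w : E3, ‖Mβ β w • (v - w)‖ :=
        norm_integral_le_integral_norm _
      rw [hveq, norm_smul, Real.norm_eq_abs, abs_of_pos hN] at hle
      have : ∫ w : E3, ‖Mβ β w • (v - w)‖ = L := by
        rw [hL_def]
        congr 1; funext w
        rw [norm_smul, Real.norm_eq_abs, abs_of_nonneg (Mβ_pos hβ w).le]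
      rw [this] at hle
      exact hle
    -- lower bound 2 : K ≤ L + N * a
    have h2 : K ≤ L + N * a := by
      have hsum : Integrable (fun w : E3 => Mβ β w * ‖v - w‖ + Mβ β w * a) :=
        hL_int.add (hM_int.mul_const a)
      have hpt : ∀ w : E3, Mβ β w * ‖w‖ ≤ Mβ β w * ‖v - w‖ + Mβ β w * a := by
        intro w
        have hM := (Mβ_pos hβ w).le
        have hle : ‖w‖ ≤ ‖v - w‖ + a := by
          calc ‖w‖ = ‖v - (v - w)‖ := by rw [sub_sub_cancel]
            _ ≤ ‖v‖ + ‖v - w‖ := norm_sub_le _ _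
            _ = ‖v - w‖ + a := by rw [ha_def]; ring
        nlinarith
      have := integral_mono hMw_int hsum hpt
      rwa [integral_add hL_int (hM_int.mul_const a), integral_mul_const] at this
    -- upper bound : L ≤ N * a + K
    have h3 : L ≤ N * a + K := by
      have hsum : Integrable (fun w : E3 => Mβ β w * a + Mβ β w * ‖w‖) :=
        (hM_int.mul_const a).add hMw_int
      have hpt : ∀ w : E3, Mβ β w * ‖v - w‖ ≤ Mβ β w * a + Mβ β w * ‖w‖ := by
        intro w
        have hM := (Mβ_pos hβ w).le
        have hle : ‖v - w‖ ≤ a + ‖w‖ := norm_sub_le _ _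
        nlinarith
      have := integral_mono hL_int hsum hpt
      rwa [integral_add (hM_int.mul_const a) hMw_int, integral_mul_const] at this
    have hlam : lam β v = Real.pi * L := rfl
    constructor
    · rw [hlam]
      rcases le_total (K / 2) (N * a) with hc | hc
      · have hm1 : min N (K / 2) ≤ K / 2 := min_le_right _ _
        have hm2 : min N (K / 2) * a ≤ N * a :=
          mul_le_mul_of_nonneg_right (min_le_left _ _) ha
        nlinarith
      · have hm1 : min N (K / 2) ≤ K / 2 := min_le_right _ _
        have hm2 : min N (K / 2) * a ≤ N * a :=
          mul_le_mul_of_nonneg_right (min_le_left _ _) ha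
        nlinarith
    · rw [hlam]
      have hm1 : N * a ≤ max N K * a :=
        mul_le_mul_of_nonneg_right (le_max_left _ _) ha
      have hm2 : K ≤ max N K := le_max_right _ _
      have hL2 : L ≤ max N K * a + max N K := by linarith
      have := mul_le_mul_of_nonneg_left hL2 hπ.le
      nlinarith
end
end

section
/- Let β > 0 and let f : ℝ³ → ℝ be measurable with ∫_{ℝ³} (1+‖v‖)·|f(v)| dv < ∞. Then the function (v, v₁, n̂) ↦ [(v−v₁)·n̂]₊ · ( M_β(v₁′)·f(v′) − M_β(v₁)·f(v) ) is integrable on ℝ³ × ℝ³ × S² with respect to (Lebesgue) × (Lebesgue) × (surface measure), and its integral vanishes: ∫_{ℝ³}∫_{ℝ³}∫_{S²} [(v−v₁)·n̂]₊ · ( M_β(v₁′)·f(v′) − M_β(v₁)·f(v) ) dσ(n̂) dv₁ dv = 0, i.e. the linear Boltzmann collision operator Q(M_β, f) has zero total mass. -/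
open MeasureTheory Real
open scoped RealInnerProductSpace

noncomputable section

/-- The integrand of the linear Boltzmann collision operator paired with the constant `1`:
for `q = (v, v₁, n̂)`, the value `[(v−v₁)·n̂]₊ · (M_β(v₁′) f(v′) − M_β(v₁) f(v))`,
where `v′ = v − ((v−v₁)·n̂) n̂` and `v₁′ = v₁ + ((v−v₁)·n̂) n̂`. -/
def collKernel (β : ℝ) (f : E3 → ℝ) (q : E3 × E3 × Metric.sphere (0 : E3) 1) : ℝ :=
  max ((inner ℝ (q.1 - q.2.1) ((q.2.2 : E3)) : ℝ)) 0 *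
    (Mβ β (q.2.1 + ((inner ℝ (q.1 - q.2.1) ((q.2.2 : E3)) : ℝ)) • (q.2.2 : E3)) *
        f (q.1 - ((inner ℝ (q.1 - q.2.1) ((q.2.2 : E3)) : ℝ)) • (q.2.2 : E3)) -
      Mβ β q.2.1 * f q.1)

/-- The collision reflection map as a linear map on `E3 × E3`. -/
def Tlin (u : E3) : (E3 × E3) →ₗ[ℝ] (E3 × E3) where
  toFun p := (p.1 - ⟪p.1 - p.2, u⟫ • u, p.2 + ⟪p.1 - p.2, u⟫ • u)
  map_add' p q := by
    have h1 : (p + q).1 - (p + q).2 = (p.1 - p.2) + (q.1 - q.2) := by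
      change (p.1 + q.1) - (p.2 + q.2) = _; abel
    have h : ⟪(p + q).1 - (p + q).2, u⟫ = ⟪p.1 - p.2, u⟫ + ⟪q.1 - q.2, u⟫ := by
      rw [h1, inner_add_left]
    refine Prod.ext ?_ ?_
    · show (p + q).1 - ⟪(p + q).1 - (p + q).2, u⟫ • u
        = (p.1 - ⟪p.1 - p.2, u⟫ • u) + (q.1 - ⟪q.1 - q.2, u⟫ • u)
      rw [h, add_smul]
      change (p.1 + q.1) - _ = _
      abel
    · show (p + q).2 + ⟪(p + q).1 - (p + q).2, u⟫ • u
        = (p.2 + ⟪p.1 - p.2, u⟫ • u) + (q.2 + ⟪q.1 - q.2, u⟫ • u)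
      rw [h, add_smul]
      change (p.2 + q.2) + _ = _
      abel
  map_smul' c p := by
    have h1 : (c • p).1 - (c • p).2 = c • (p.1 - p.2) := by
      change c • p.1 - c • p.2 = _; rw [smul_sub]
    have h : ⟪(c • p).1 - (c • p).2, u⟫ = c * ⟪p.1 - p.2, u⟫ := by
      rw [h1, real_inner_smul_left]
    refine Prod.ext ?_ ?_
    · show (c • p).1 - ⟪(c • p).1 - (c • p).2, u⟫ • u = c • (p.1 - ⟪p.1 - p.2, u⟫ • u)
      rw [h, mul_smul, smul_sub]
      rfl
    · show (c • p).2 + ⟪(c • p).1 - (c • p).2, u⟫ • u = c • (p.2 + ⟪p.1 - p.2, u⟫ • u)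
      rw [h, mul_smul, smul_add]
      rfl

lemma Tlin_apply (u : E3) (p : E3 × E3) :
    Tlin u p = (p.1 - ⟪p.1 - p.2, u⟫ • u, p.2 + ⟪p.1 - p.2, u⟫ • u) := rfl

lemma Tlin_invol (u : E3) (hu : ⟪u, u⟫ = 1) (p : E3 × E3) : Tlin u (Tlin u p) = p := by
  obtain ⟨v, w⟩ := p
  simp only [Tlin_apply]
  have ha : ⟪v - ⟪v - w, u⟫ • u - (w + ⟪v - w, u⟫ • u), u⟫ = -⟪v - w, u⟫ := by
    rw [show v - ⟪v - w, u⟫ • u - (w + ⟪v - w, u⟫ • u) = (v - w) - (2 * ⟪v - w, u⟫) • u by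
      rw [two_mul, add_smul]; abel]
    rw [inner_sub_left, real_inner_smul_left, hu]
    ring
  rw [ha]
  refine Prod.ext ?_ ?_
  · show v - ⟪v - w, u⟫ • u - (-⟪v - w, u⟫) • u = v
    rw [neg_smul]; abel
  · show w + ⟪v - w, u⟫ • u + (-⟪v - w, u⟫) • u = w
    rw [neg_smul]; abel

lemma Tlin_neg (u : E3) : Tlin (-u) = Tlin u := by
  refine LinearMap.ext fun p => ?_
  rw [Tlin_apply, Tlin_apply, inner_neg_right]
  rw [neg_smul, smul_neg, neg_neg]

instance : Measure.IsAddHaarMeasure ((volume : Measure E3).prod (volume : Measure E3)) :=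
  Measure.prod.instIsAddHaarMeasure _ _

lemma Tlin_measurePreserving (u : E3) (hu : ⟪u, u⟫ = 1) :
    MeasurePreserving (Tlin u)
      ((volume : Measure E3).prod volume) ((volume : Measure E3).prod volume) := by
  have hcomp : (Tlin u).comp (Tlin u) = LinearMap.id := LinearMap.ext fun p => Tlin_invol u hu p
  have hdet : LinearMap.det (Tlin u) * LinearMap.det (Tlin u) = 1 := by
    rw [← LinearMap.det_comp, hcomp, LinearMap.det_id]
  have hne : LinearMap.det (Tlin u) ≠ 0 := by
    intro h; rw [h, zero_mul] at hdet; exact zero_ne_one hdet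
  have habs : |(LinearMap.det (Tlin u))⁻¹| = 1 := by
    rcases mul_self_eq_one_iff.1 hdet with h | h <;> rw [h] <;> norm_num
  refine ⟨(Tlin u).continuous_of_finiteDimensional.measurable, ?_⟩
  rw [Measure.map_linearMap_addHaar_eq_smul_addHaar _ hne, habs]
  simp

/-- Spherical coordinates map. -/
def sphMap (p : Fin 2 → ℝ) : E3 :=
  (WithLp.equiv 2 (Fin 3 → ℝ)).symm
    ![Real.sin (p 0) * Real.cos (p 1), Real.sin (p 0) * Real.sin (p 1), Real.cos (p 0)]

lemma sphMap_apply (p : Fin 2 → ℝ) (i : Fin 3) :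
    sphMap p = (WithLp.equiv 2 (Fin 3 → ℝ)).symm
      ![Real.sin (p 0) * Real.cos (p 1), Real.sin (p 0) * Real.sin (p 1), Real.cos (p 0)] := rfl

lemma abs_sin_sub_sin (a b : ℝ) : |Real.sin a - Real.sin b| ≤ |a - b| := by
  rw [Real.sin_sub_sin, abs_mul, abs_mul]
  have h1 : |Real.sin ((a - b) / 2)| ≤ |a - b| / 2 := by
    calc |Real.sin ((a - b) / 2)| ≤ |(a - b) / 2| := Real.abs_sin_le_abs
      _ = |a - b| / 2 := by rw [abs_div]; norm_num
  have h2 : |Real.cos ((a + b) / 2)| ≤ 1 := Real.abs_cos_le_one _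
  have h0 : |(2:ℝ)| = 2 := by norm_num
  rw [h0]
  nlinarith [abs_nonneg (Real.sin ((a - b) / 2)), abs_nonneg (Real.cos ((a + b) / 2)),
    abs_nonneg (a - b)]

lemma abs_cos_sub_cos (a b : ℝ) : |Real.cos a - Real.cos b| ≤ |a - b| := by
  rw [Real.cos_sub_cos, abs_mul, abs_mul]
  have h1 : |Real.sin ((a - b) / 2)| ≤ |a - b| / 2 := by
    calc |Real.sin ((a - b) / 2)| ≤ |(a - b) / 2| := Real.abs_sin_le_abs
      _ = |a - b| / 2 := by rw [abs_div]; norm_num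
  have h2 : |Real.sin ((a + b) / 2)| ≤ 1 := Real.abs_sin_le_one _
  have h0 : |(-2:ℝ)| = 2 := by norm_num
  rw [h0]
  nlinarith [abs_nonneg (Real.sin ((a - b) / 2)), abs_nonneg (Real.sin ((a + b) / 2)),
    abs_nonneg (a - b)]

lemma sphMap_lipschitz : LipschitzWith 4 sphMap := by
  rw [lipschitzWith_iff_dist_le_mul]
  intro p q
  have h0 : |p 0 - q 0| ≤ dist p q := by
    simpa [Real.dist_eq] using dist_le_pi_dist p q 0
  have h1 : |p 1 - q 1| ≤ dist p q := by
    simpa [Real.dist_eq] using dist_le_pi_dist p q 1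
  have hd : (0:ℝ) ≤ dist p q := dist_nonneg
  -- coordinatewise bounds
  have c0 : |Real.sin (p 0) * Real.cos (p 1) - Real.sin (q 0) * Real.cos (q 1)|
      ≤ 2 * dist p q := by
    have e : Real.sin (p 0) * Real.cos (p 1) - Real.sin (q 0) * Real.cos (q 1)
        = (Real.sin (p 0) - Real.sin (q 0)) * Real.cos (p 1)
          + Real.sin (q 0) * (Real.cos (p 1) - Real.cos (q 1)) := by ring
    rw [e]
    calc _ ≤ |(Real.sin (p 0) - Real.sin (q 0)) * Real.cos (p 1)|
          + |Real.sin (q 0) * (Real.cos (p 1) - Real.cos (q 1))| := abs_add_le _ _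
      _ ≤ |Real.sin (p 0) - Real.sin (q 0)| * 1 + 1 * |Real.cos (p 1) - Real.cos (q 1)| := by
          rw [abs_mul, abs_mul]
          gcongr
          · exact Real.abs_cos_le_one _
          · exact Real.abs_sin_le_one _
      _ ≤ dist p q + dist p q := by
          rw [mul_one, one_mul]
          exact add_le_add ((abs_sin_sub_sin _ _).trans h0) ((abs_cos_sub_cos _ _).trans h1)
      _ = 2 * dist p q := by ring
  have c1 : |Real.sin (p 0) * Real.sin (p 1) - Real.sin (q 0) * Real.sin (q 1)|
      ≤ 2 * dist p q := by
    have e : Real.sin (p 0) * Real.sin (p 1) - Real.sin (q 0) * Real.sin (q 1)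
        = (Real.sin (p 0) - Real.sin (q 0)) * Real.sin (p 1)
          + Real.sin (q 0) * (Real.sin (p 1) - Real.sin (q 1)) := by ring
    rw [e]
    calc _ ≤ |(Real.sin (p 0) - Real.sin (q 0)) * Real.sin (p 1)|
          + |Real.sin (q 0) * (Real.sin (p 1) - Real.sin (q 1))| := abs_add_le _ _
      _ ≤ |Real.sin (p 0) - Real.sin (q 0)| * 1 + 1 * |Real.sin (p 1) - Real.sin (q 1)| := by
          rw [abs_mul, abs_mul]
          gcongr
          · exact Real.abs_sin_le_one _
          · exact Real.abs_sin_le_one _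
      _ ≤ dist p q + dist p q := by
          rw [mul_one, one_mul]
          exact add_le_add ((abs_sin_sub_sin _ _).trans h0) ((abs_sin_sub_sin _ _).trans h1)
      _ = 2 * dist p q := by ring
  have c2 : |Real.cos (p 0) - Real.cos (q 0)| ≤ 2 * dist p q :=
    (abs_cos_sub_cos _ _).trans (by linarith)
  rw [EuclideanSpace.dist_eq]
  have key : ∑ i, dist (sphMap p i) (sphMap q i) ^ 2 ≤ (4 * dist p q) ^ 2 := by
    rw [Fin.sum_univ_three]
    have e0 : dist (sphMap p 0) (sphMap q 0)
        = |Real.sin (p 0) * Real.cos (p 1) - Real.sin (q 0) * Real.cos (q 1)| := by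
      simp [sphMap, Real.dist_eq, WithLp.equiv_symm_apply, PiLp.toLp_apply]
    have e1 : dist (sphMap p 1) (sphMap q 1)
        = |Real.sin (p 0) * Real.sin (p 1) - Real.sin (q 0) * Real.sin (q 1)| := by
      simp [sphMap, Real.dist_eq, WithLp.equiv_symm_apply, PiLp.toLp_apply]
    have e2 : dist (sphMap p 2) (sphMap q 2) = |Real.cos (p 0) - Real.cos (q 0)| := by
      simp [sphMap, Real.dist_eq, WithLp.equiv_symm_apply, PiLp.toLp_apply]
    rw [e0, e1, e2]
    have a0 := abs_nonneg (Real.sin (p 0) * Real.cos (p 1) - Real.sin (q 0) * Real.cos (q 1))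
    have a1 := abs_nonneg (Real.sin (p 0) * Real.sin (p 1) - Real.sin (q 0) * Real.sin (q 1))
    have a2 := abs_nonneg (Real.cos (p 0) - Real.cos (q 0))
    nlinarith [c0, c1, c2]
  calc Real.sqrt (∑ i, dist (sphMap p i) (sphMap q i) ^ 2)
      ≤ Real.sqrt ((4 * dist p q) ^ 2) := Real.sqrt_le_sqrt key
    _ = 4 * dist p q := Real.sqrt_sq (by linarith)
    _ = (4:NNReal) * dist p q := by norm_num

lemma sphMap_surj {u : E3} (hu : ‖u‖ = 1) :
    ∃ p ∈ Metric.closedBall (0 : Fin 2 → ℝ) 4, sphMap p = u := by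
  have hsum : (u 0) ^ 2 + (u 1) ^ 2 + (u 2) ^ 2 = 1 := by
    have := hu
    rw [EuclideanSpace.norm_eq] at this
    have h2 : ∑ i, ‖u i‖ ^ 2 = 1 := by
      rw [← Real.sq_sqrt (Finset.sum_nonneg fun i _ => sq_nonneg ‖u i‖), this]
      norm_num
    simpa [Fin.sum_univ_three, Real.norm_eq_abs, sq_abs] using h2
  have hu2 : -1 ≤ u 2 ∧ u 2 ≤ 1 := by constructor <;> nlinarith
  set θ := Real.arccos (u 2) with hθ
  have hcos : Real.cos θ = u 2 := Real.cos_arccos hu2.1 hu2.2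
  have hsin : Real.sin θ = Real.sqrt ((u 0) ^ 2 + (u 1) ^ 2) := by
    rw [hθ, Real.sin_arccos]
    congr 1
    nlinarith
  have hθball : |θ| ≤ 4 := by
    rw [abs_of_nonneg (Real.arccos_nonneg _)]
    exact (Real.arccos_le_pi _).trans (by linarith [Real.pi_le_four])
  set z : ℂ := ⟨u 0, u 1⟩ with hz
  by_cases h0 : z = 0
  · have h00 : u 0 = 0 := congrArg Complex.re h0
    have h10 : u 1 = 0 := congrArg Complex.im h0
    refine ⟨![θ, 0], ?_, ?_⟩
    · rw [Metric.mem_closedBall, dist_zero_right]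
      refine (pi_norm_le_iff_of_nonneg (by norm_num)).2 fun i => ?_
      fin_cases i
      · simpa [Real.norm_eq_abs] using hθball
      · simp
    · have hs0 : Real.sin θ = 0 := by rw [hsin, h00, h10]; simp
      ext i
      fin_cases i <;>
        simp [sphMap, WithLp.equiv_symm_apply, PiLp.toLp_apply, hs0, hcos, h00, h10]
  · have habs : ‖z‖ = Real.sin θ := by
      rw [hsin, Complex.norm_def, Complex.normSq_mk]
      congr 1
      ring
    have habsne : ‖z‖ ≠ 0 := by
      simpa using h0
    refine ⟨![θ, Complex.arg z], ?_, ?_⟩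
    · rw [Metric.mem_closedBall, dist_zero_right]
      refine (pi_norm_le_iff_of_nonneg (by norm_num)).2 fun i => ?_
      fin_cases i
      · simpa [Real.norm_eq_abs] using hθball
      · simp only [Real.norm_eq_abs]
        exact (Complex.abs_arg_le_pi _).trans (by linarith [Real.pi_le_four])
    · ext i
      fin_cases i
      · show Real.sin θ * Real.cos (Complex.arg z) = u 0
        rw [Complex.cos_arg h0, ← habs]
        field_simp
        rfl
      · show Real.sin θ * Real.sin (Complex.arg z) = u 1
        rw [Complex.sin_arg, ← habs]
        field_simp
        rfl
      · show Real.cos θ = u 2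
        exact hcos

lemma sphere_hausdorff_finite :
    μH[2] (Metric.sphere (0 : E3) 1) < ⊤ := by
  have hsub : Metric.sphere (0 : E3) 1 ⊆ sphMap '' Metric.closedBall 0 4 := by
    intro u hu
    rcases sphMap_surj (by simpa using mem_sphere_zero_iff_norm.1 hu) with ⟨p, hp, hpu⟩
    exact ⟨p, hp, hpu⟩
  calc μH[2] (Metric.sphere (0 : E3) 1) ≤ μH[2] (sphMap '' Metric.closedBall 0 4) :=
        measure_mono hsub
    _ ≤ (4 : NNReal) ^ (2:ℝ) * μH[2] (Metric.closedBall (0 : Fin 2 → ℝ) 4) :=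
        sphMap_lipschitz.hausdorffMeasure_image_le (by norm_num) _
    _ < ⊤ := by
        have hpi : (μH[2] : Measure (Fin 2 → ℝ)) = volume := by
          have := MeasureTheory.hausdorffMeasure_pi_real (ι := Fin 2)
          simpa using this
        rw [hpi]
        refine ENNReal.mul_lt_top ?_ ?_
        · exact ENNReal.rpow_lt_top_of_nonneg (by norm_num) (by simp)
        · exact (isCompact_closedBall _ _).measure_lt_top

abbrev Sph := Metric.sphere (0 : E3) 1

instance : IsFiniteMeasure (μH[2] : Measure Sph) := by
  constructor
  have h := (isometry_subtype_coe (s := fun x => x ∈ Metric.sphere (0 : E3) 1)).hausdorffMeasure_image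
    (Or.inl (by norm_num : (0:ℝ) ≤ 2)) (Set.univ : Set Sph)
  rw [Set.image_univ, Subtype.range_coe] at h
  exact lt_of_le_of_lt (le_of_eq h.symm) sphere_hausdorff_finite

/-- The antipodal map on the sphere as an isometry equivalence. -/
def negSph : Sph ≃ᵢ Sph where
  toFun x := ⟨-(x : E3), by
    rw [mem_sphere_zero_iff_norm, norm_neg, ← mem_sphere_zero_iff_norm]; exact x.2⟩
  invFun x := ⟨-(x : E3), by
    rw [mem_sphere_zero_iff_norm, norm_neg, ← mem_sphere_zero_iff_norm]; exact x.2⟩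
  left_inv x := by ext; simp
  right_inv x := by ext; simp
  isometry_toFun := Isometry.of_dist_eq fun a b => by
    rw [Subtype.dist_eq, Subtype.dist_eq]
    exact dist_neg_neg _ _

lemma negSph_coe (x : Sph) : (negSph x : E3) = -(x : E3) := rfl

lemma negSph_measurePreserving :
    MeasurePreserving negSph (μH[2] : Measure Sph) (μH[2] : Measure Sph) :=
  ⟨negSph.continuous.measurable, negSph.map_hausdorffMeasure 2⟩

lemma gaussE3 {b : ℝ} (hb : 0 < b) :
    Integrable (fun v : E3 => Real.exp (-b * ‖v‖ ^ 2)) := by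
  have h := (GaussianFourier.integrable_cexp_neg_mul_sq_norm_add
    (V := E3) (b := (b : ℂ)) (by simpa using hb) 0 (0 : E3)).norm
  refine h.congr (Filter.Eventually.of_forall fun v => ?_)
  simp only [Complex.norm_exp]
  congr 1
  simp [← Complex.ofReal_pow, ← Complex.ofReal_mul, ← Complex.ofReal_neg]

lemma mom_integrable {b : ℝ} (hb : 0 < b) :
    Integrable (fun v : E3 => (1 + ‖v‖) * Real.exp (-b * ‖v‖ ^ 2)) := by
  have hb2 : 0 < b / 2 := by linarith
  refine ((gaussE3 hb2).const_mul (Real.exp (1 / (2 * b)))).mono' ?_ ?_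
  · exact ((continuous_const.add continuous_norm).mul
      (((continuous_const.mul (continuous_norm.pow 2)).rexp))).aestronglyMeasurable
  · refine Filter.Eventually.of_forall fun v => ?_
    set t := ‖v‖ with ht
    have ht0 : 0 ≤ t := norm_nonneg _
    have h1 : 1 + t ≤ Real.exp t := by linarith [Real.add_one_le_exp t]
    have key : (1 + t) * Real.exp (-b * t ^ 2) ≤ Real.exp (t + -b * t ^ 2) := by
      rw [Real.exp_add]
      exact mul_le_mul_of_nonneg_right h1 (Real.exp_pos _).le
    have key2 : Real.exp (t + -b * t ^ 2) ≤ Real.exp (1 / (2 * b) + -(b / 2) * t ^ 2) := by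
      rw [Real.exp_le_exp]
      have h2b : 0 < 2 * b := by linarith
      rw [← mul_le_mul_iff_right₀ h2b]
      have e : 2 * b * (1 / (2 * b) + -(b / 2) * t ^ 2) = 1 - b * b * t ^ 2 := by
        field_simp; ring
      rw [e]
      nlinarith [sq_nonneg (b * t - 1)]
    have hnn : 0 ≤ (1 + t) * Real.exp (-b * t ^ 2) := by positivity
    rw [Real.norm_eq_abs, abs_of_nonneg hnn]
    calc (1 + t) * Real.exp (-b * t ^ 2) ≤ Real.exp (1 / (2 * b) + -(b / 2) * t ^ 2) :=
          key.trans key2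
      _ = Real.exp (1 / (2 * b)) * Real.exp (-(b / 2) * t ^ 2) := Real.exp_add _ _


section Main

variable (β : ℝ) (f : E3 → ℝ)

abbrev Om := Sph × (E3 × E3)

/-- The full space measure, sphere first. -/
def ρm : Measure Om := (μH[2] : Measure Sph).prod ((volume : Measure E3).prod volume)

/-- The loss part of the collision kernel in sphere-first coordinates. -/
def Lloss (p : Om) : ℝ :=
  max (⟪p.2.1 - p.2.2, (p.1 : E3)⟫) 0 * (Mβ β p.2.2 * f p.2.1)

/-- The full collision transformation. -/
def Psi : Om → Om := fun p => (negSph p.1, Tlin (p.1 : E3) p.2)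

lemma sph_inner_self (x : Sph) : ⟪(x : E3), (x : E3)⟫ = 1 := by
  rw [real_inner_self_eq_norm_sq, mem_sphere_zero_iff_norm.1 x.2]
  norm_num

lemma Psi_invol : Function.Involutive Psi := by
  intro p
  unfold Psi
  refine Prod.ext ?_ ?_
  · show negSph (negSph p.1) = p.1
    ext
    simp [negSph_coe]
  · show Tlin ((negSph p.1 : Sph) : E3) (Tlin (p.1 : E3) p.2) = p.2
    rw [negSph_coe, Tlin_neg]
    exact Tlin_invol _ (sph_inner_self p.1) _

lemma Psi_continuous : Continuous Psi := by
  unfold Psi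
  have hinner : Continuous fun p : Om => ⟪p.2.1 - p.2.2, (p.1 : E3)⟫ :=
    Continuous.inner ((continuous_snd.fst).sub (continuous_snd.snd))
      (continuous_subtype_val.comp continuous_fst)
  have hn : Continuous fun p : Om => (p.1 : E3) := continuous_subtype_val.comp continuous_fst
  refine Continuous.prodMk (negSph.continuous.comp continuous_fst) ?_
  simp only [Tlin_apply]
  exact Continuous.prodMk ((continuous_snd.fst).sub (hinner.smul hn))
    ((continuous_snd.snd).add (hinner.smul hn))

/-- `Psi` as a measurable equivalence. -/
def PsiME : Om ≃ᵐ Om where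
  toEquiv := Function.Involutive.toPerm Psi Psi_invol
  measurable_toFun := Psi_continuous.measurable
  measurable_invFun := Psi_continuous.measurable

lemma PsiME_coe : ⇑PsiME = Psi := rfl

lemma Psi_measurePreserving : MeasurePreserving Psi ρm ρm := by
  refine MeasurePreserving.skew_product (g := fun (u : Sph) (x : E3 × E3) => Tlin (u : E3) x)
    negSph_measurePreserving ?_ (Filter.Eventually.of_forall fun u =>
      (Tlin_measurePreserving _ (sph_inner_self u)).map_eq)
  have : Function.uncurry (fun (u : Sph) (x : E3 × E3) => Tlin (u : E3) x)
      = fun p : Om => Tlin (p.1 : E3) p.2 := rfl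
  rw [this]
  have hc : Continuous fun p : Om => Tlin (p.1 : E3) p.2 := Psi_continuous.snd
  exact hc.measurable

/-- Reassociation equivalence from the statement's coordinates to sphere-first coordinates. -/
def Eeq : (E3 × E3 × Sph) ≃ᵐ Om :=
  (MeasurableEquiv.prodAssoc (α := E3) (β := E3) (γ := Sph)).symm.trans
    MeasurableEquiv.prodComm

lemma Eeq_apply (q : E3 × E3 × Sph) : Eeq q = (q.2.2, (q.1, q.2.1)) := rfl

lemma Eeq_measurePreserving :
    MeasurePreserving Eeq
      ((volume : Measure E3).prod ((volume : Measure E3).prod (μH[2] : Measure Sph))) ρm := by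
  refine ⟨Eeq.measurable, ?_⟩
  have h1 := ((measurePreserving_prodAssoc (volume : Measure E3) (volume : Measure E3)
    (μH[2] : Measure Sph)).symm MeasurableEquiv.prodAssoc)
  have h2 := Measure.measurePreserving_swap
    (μ := ((volume : Measure E3).prod (volume : Measure E3))) (ν := (μH[2] : Measure Sph))
  have := (h2.comp h1).map_eq
  convert this using 2 <;> rfl

lemma collKernel_eq (q : E3 × E3 × Sph) :
    collKernel β f q = Lloss β f (Psi (Eeq q)) - Lloss β f (Eeq q) := by
  obtain ⟨v, v₁, n⟩ := q
  have hu : ⟪(n : E3), (n : E3)⟫ = 1 := sph_inner_self n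
  rw [show Eeq (v, v₁, n) = (n, (v, v₁)) from rfl]
  set a := ⟪v - v₁, (n : E3)⟫ with ha
  have hPsi : Psi (n, (v, v₁)) = (negSph n, (v - a • (n : E3), v₁ + a • (n : E3))) := rfl
  rw [hPsi]
  have hinner : ⟪(v - a • (n : E3)) - (v₁ + a • (n : E3)), ((negSph n : Sph) : E3)⟫ = a := by
    rw [negSph_coe, inner_neg_right]
    rw [show (v - a • (n : E3)) - (v₁ + a • (n : E3)) = (v - v₁) - (2 * a) • (n : E3) by
      rw [two_mul, add_smul]; abel]
    rw [inner_sub_left, real_inner_smul_left, hu, ha]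
    ring
  unfold Lloss collKernel
  simp only []
  rw [hinner, ← ha]
  ring

variable {β f}

lemma Mβ_nonneg (hβ : 0 < β) (v : E3) : 0 ≤ Mβ β v := by
  unfold Mβ
  have : (0:ℝ) ≤ (β / (2 * Real.pi)) ^ ((3 : ℝ) / 2) :=
    Real.rpow_nonneg (by positivity) _
  positivity

lemma Mβ_mom_integrable (hβ : 0 < β) :
    Integrable (fun v : E3 => (1 + ‖v‖) * Mβ β v) := by
  have h := (mom_integrable (b := β / 2) (by linarith)).const_mul
    ((β / (2 * Real.pi)) ^ ((3 : ℝ) / 2))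
  refine h.congr (Filter.Eventually.of_forall fun v => ?_)
  unfold Mβ
  ring

lemma Mβ_continuous : Continuous (Mβ β) :=
  continuous_const.mul ((continuous_const.mul (continuous_norm.pow 2)).rexp)

lemma Lloss_measurable (hf : Measurable f) : Measurable (Lloss β f) := by
  have hinnerc : Continuous fun p : Om => ⟪p.2.1 - p.2.2, (p.1 : E3)⟫ :=
    Continuous.inner ((continuous_snd.fst).sub (continuous_snd.snd))
      (continuous_subtype_val.comp continuous_fst)
  have hinner : Measurable fun p : Om => ⟪p.2.1 - p.2.2, (p.1 : E3)⟫ := hinnerc.measurable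
  exact (hinner.max measurable_const).mul
    (((Mβ_continuous.measurable).comp (measurable_snd.snd)).mul (hf.comp measurable_snd.fst))

lemma Lloss_bound (hβ : 0 < β) (p : Om) :
    ‖Lloss β f p‖ ≤ ((1 + ‖p.2.1‖) * |f p.2.1|) * ((1 + ‖p.2.2‖) * Mβ β p.2.2) := by
  obtain ⟨n, v, v₁⟩ := p
  have hM := Mβ_nonneg hβ v₁
  have hmax : max (⟪v - v₁, (n : E3)⟫) 0 ≤ ‖v‖ + ‖v₁‖ := by
    refine max_le ?_ (by positivity)
    calc ⟪v - v₁, (n : E3)⟫ ≤ |⟪v - v₁, (n : E3)⟫| := le_abs_self _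
      _ ≤ ‖v - v₁‖ * ‖(n : E3)‖ := abs_real_inner_le_norm _ _
      _ = ‖v - v₁‖ := by rw [mem_sphere_zero_iff_norm.1 n.2, mul_one]
      _ ≤ ‖v‖ + ‖v₁‖ := norm_sub_le _ _
  have hmax0 : 0 ≤ max (⟪v - v₁, (n : E3)⟫) 0 := le_max_right _ _
  have : ‖Lloss β f (n, (v, v₁))‖
      = max (⟪v - v₁, (n : E3)⟫) 0 * (Mβ β v₁ * |f v|) := by
    unfold Lloss
    rw [Real.norm_eq_abs, abs_mul, abs_of_nonneg hmax0, abs_mul, abs_of_nonneg hM]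
  rw [this]
  have h1 : 0 ≤ ‖v‖ := norm_nonneg _
  have h2 : 0 ≤ ‖v₁‖ := norm_nonneg _
  have h3 : 0 ≤ |f v| := abs_nonneg _
  nlinarith [mul_nonneg hM h3, mul_nonneg (mul_nonneg h1 h2) (mul_nonneg hM h3),
    mul_nonneg h1 h2]

lemma Lloss_integrable (hβ : 0 < β) (hf : Measurable f)
    (hf1 : Integrable (fun v : E3 => (1 + ‖v‖) * |f v|)) :
    Integrable (Lloss β f) ρm := by
  have h2 : Integrable (fun x : E3 × E3 => ((1 + ‖x.1‖) * |f x.1|) * ((1 + ‖x.2‖) * Mβ β x.2))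
      ((volume : Measure E3).prod volume) := hf1.mul_prod (Mβ_mom_integrable hβ)
  have h3 := (integrable_const (μ := (μH[2] : Measure Sph)) (1:ℝ)).mul_prod h2
  have hB : Integrable
      (fun p : Om => ((1 + ‖p.2.1‖) * |f p.2.1|) * ((1 + ‖p.2.2‖) * Mβ β p.2.2)) ρm := by
    simpa [ρm] using h3
  exact hB.mono' (Lloss_measurable hf).aestronglyMeasurable
    (Filter.Eventually.of_forall (Lloss_bound hβ))

end Main

/-- Mass conservation for the linear Boltzmann collision operator: if `f` is measurable
with `∫ (1+‖v‖)|f(v)| dv < ∞`, then the collision integrand is integrable on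
`ℝ³ × ℝ³ × S²` (Lebesgue × Lebesgue × surface measure) and its total integral vanishes. -/
theorem collision_operator_zero_mass (β : ℝ) (hβ : 0 < β) (f : E3 → ℝ)
    (hf : Measurable f)
    (hf1 : Integrable (fun v : E3 => (1 + ‖v‖) * |f v|)) :
    Integrable (collKernel β f)
      ((volume : Measure E3).prod
        ((volume : Measure E3).prod (μH[2] : Measure (Metric.sphere (0 : E3) 1)))) ∧
    (∫ q : E3 × E3 × Metric.sphere (0 : E3) 1, collKernel β f q
        ∂((volume : Measure E3).prod
          ((volume : Measure E3).prod (μH[2] : Measure (Metric.sphere (0 : E3) 1))))) = 0 := by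
  have hemb : MeasurableEmbedding (Psi) := by
    rw [← PsiME_coe]; exact PsiME.measurableEmbedding
  have hL : Integrable (Lloss β f) ρm := Lloss_integrable hβ hf hf1
  have hLΨ : Integrable ((Lloss β f) ∘ Psi) ρm :=
    (Psi_measurePreserving.integrable_comp_emb hemb).2 hL
  have hLΨ' : Integrable (fun p : Om => Lloss β f (Psi p)) ρm := hLΨ
  have hF : Integrable (fun p : Om => Lloss β f (Psi p) - Lloss β f p) ρm := hLΨ'.sub hL
  have hker : collKernel β f = (fun p : Om => Lloss β f (Psi p) - Lloss β f p) ∘ Eeq :=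
    funext fun q => collKernel_eq β f q
  constructor
  · rw [hker]
    exact (Eeq_measurePreserving.integrable_comp_emb Eeq.measurableEmbedding).2 hF
  · rw [hker]
    have h1 := Eeq_measurePreserving.integral_comp Eeq.measurableEmbedding
      (fun p : Om => Lloss β f (Psi p) - Lloss β f p)
    simp only [Function.comp_apply] at h1 ⊢
    rw [h1, integral_sub hLΨ' hL]
    have h2 : (∫ p : Om, Lloss β f (Psi p) ∂ρm) = ∫ p : Om, Lloss β f p ∂ρm :=
      Psi_measurePreserving.integral_comp hemb _
    rw [h2, sub_self]
end
end

section
/- Let β > 0. There exists a constant C > 0 (depending only on β) such that for all v ∈ ℝ³: ∫_{ℝ³} e(v,v')/‖v'−v‖ dv' ≤ C·(1 + ‖v‖), where the integrand is extended by 0 at v' = v. -/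
open MeasureTheory Set Metric
open scoped ENNReal NNReal

noncomputable section

/-- `e(v,v') = (β/(2π))^(1/2) · exp(−(β/2)·((v'·(v'−v))/‖v'−v‖)²)`, the integral of `M_β`
over the plane `E(v,v')`. -/
def eFun (β : ℝ) (v v' : E3) : ℝ :=
  (β / (2 * Real.pi)) ^ ((1 : ℝ) / 2) *
    Real.exp (-(β / 2) * ((inner ℝ v' (v' - v) : ℝ) / ‖v' - v‖) ^ 2)

lemma gauss_ptwise (β : ℝ) (hβ : 0 < β) (s V : ℝ) (hV : 0 ≤ V) :
    Real.exp (-(β/2)*s^2) * (|s| + V) ≤ (2/Real.sqrt β + V) * Real.exp (-(β/4)*s^2) := by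
  have hE : Real.exp (-(β/2)*s^2) = Real.exp (-(β/4)*s^2) * Real.exp (-(β/4)*s^2) := by
    rw [← Real.exp_add]; ring_nf
  have h1 : Real.exp (-(β/4)*s^2) ≤ 1 := Real.exp_le_one_iff.mpr (by nlinarith [sq_nonneg s])
  have h0 : 0 ≤ Real.exp (-(β/4)*s^2) := (Real.exp_pos _).le
  have hsb : 0 < Real.sqrt β := Real.sqrt_pos.mpr hβ
  have hb : Real.sqrt β * Real.sqrt β = β := Real.mul_self_sqrt hβ.le
  have h2 : |s| * Real.exp (-(β/4)*s^2) ≤ 2 / Real.sqrt β := by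
    have hr : -(β/4)*s^2 = -((β/4)*s^2) := by ring
    rw [hr, Real.exp_neg]
    have hEpos : 0 < Real.exp ((β/4)*s^2) := Real.exp_pos _
    rw [mul_inv_le_iff₀ hEpos, div_mul_eq_mul_div, le_div_iff₀ hsb]
    have hge : (β/4)*s^2 + 1 ≤ Real.exp ((β/4)*s^2) := Real.add_one_le_exp _
    nlinarith [sq_nonneg (Real.sqrt β * |s| - 2), sq_abs s, abs_nonneg s]
  calc Real.exp (-(β/2)*s^2) * (|s| + V)
      = (|s| * Real.exp (-(β/4)*s^2)) * Real.exp (-(β/4)*s^2)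
        + V * (Real.exp (-(β/4)*s^2) * Real.exp (-(β/4)*s^2)) := by rw [hE]; ring
    _ ≤ (2/Real.sqrt β) * Real.exp (-(β/4)*s^2) + V * (1 * Real.exp (-(β/4)*s^2)) := by gcongr
    _ = (2/Real.sqrt β + V) * Real.exp (-(β/4)*s^2) := by ring

set_option maxHeartbeats 1000000

/-- There is a constant `C > 0` (depending only on `β`) such that for all `v`,
`∫ e(v,v')/‖v'−v‖ dv' ≤ C (1 + ‖v‖)` (the integrand extended by `0` at `v' = v`,
which is automatic by the convention `x/0 = 0`). -/
theorem carleman_kernel_linear_bound (β : ℝ) (hβ : 0 < β) :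
    ∃ C : ℝ, 0 < C ∧ ∀ v : E3,
      (∫⁻ v' : E3, ENNReal.ofReal (eFun β v v' / ‖v' - v‖)) ≤
        ENNReal.ofReal (C * (1 + ‖v‖)) := by
  have hπ : 0 < Real.pi := Real.pi_pos
  set c : ℝ := (β / (2 * Real.pi)) ^ ((1 : ℝ) / 2) with hc_def
  have hc : 0 < c := Real.rpow_pos_of_pos (by positivity) _
  set I : ℝ := Real.sqrt (Real.pi / (β/4)) with hI_def
  have hI : 0 < I := Real.sqrt_pos.mpr (by positivity)
  have hsb : 0 < Real.sqrt β := Real.sqrt_pos.mpr hβ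
  set K : ℝ := c * (2 / Real.sqrt β + 1) * I with hK_def
  have hK : 0 < K := by positivity
  set T : ℝ := ((volume : Measure E3).toSphere Set.univ).toReal with hT_def
  have hT : 0 ≤ T := ENNReal.toReal_nonneg
  refine ⟨K * (T + 1), by positivity, fun v => ?_⟩
  set V := ‖v‖ with hV_def
  have hV : 0 ≤ V := norm_nonneg v
  -- the translated integrand
  set G : E3 → ℝ≥0∞ := fun w =>
    ENNReal.ofReal ((c * Real.exp (-(β/2) * ((inner ℝ (v + w) w : ℝ) / ‖w‖)^2)) / ‖w‖) with hG_def
  have hinner : Measurable fun w : E3 => (inner ℝ (v + w) w : ℝ) :=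
    ((continuous_const.add continuous_id).inner continuous_id).measurable
  have hG : Measurable G := by
    exact ((((((hinner.div measurable_norm).pow_const 2).const_mul
      (-(β/2))).exp).const_mul c).div measurable_norm).ennreal_ofReal
  -- step 1: translation
  have step1 : (∫⁻ v' : E3, ENNReal.ofReal (eFun β v v' / ‖v' - v‖)) = ∫⁻ w, G w := by
    have h : ∀ v' : E3, ENNReal.ofReal (eFun β v v' / ‖v' - v‖) = G (v' - v) := by
      intro v'
      have hv : v + (v' - v) = v' := by abel
      simp only [G, eFun, hv, hc_def]
    simp_rw [h]
    exact lintegral_sub_right_eq_self G v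
  rw [step1]
  -- step 2: restrict to {0}ᶜ and pass to polar coordinates
  have hdim : Module.finrank ℝ E3 = 3 := finrank_euclideanSpace_fin
  set g : sphere (0 : E3) 1 × Ioi (0:ℝ) → ℝ≥0∞ :=
    fun p => G (((homeomorphUnitSphereProd E3).symm p : ({0}ᶜ : Set E3)) : E3) with hg_def
  have hg_meas : Measurable g :=
    hG.comp (continuous_subtype_val.comp (homeomorphUnitSphereProd E3).symm.continuous).measurable
  have step2 : (∫⁻ w, G w) =
      ∫⁻ p, g p ∂(((volume : Measure E3).toSphere).prod (Measure.volumeIoiPow 2)) := by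
    have h0 : (∫⁻ w, G w) = ∫⁻ w in ({0}ᶜ : Set E3), G w := by
      rw [restrict_compl_singleton]
    rw [h0, ← lintegral_subtype_comap (measurableSet_singleton (0:E3)).compl]
    have := (Measure.measurePreserving_homeomorphUnitSphereProd
      (volume : Measure E3)).lintegral_comp hg_meas
    rw [hdim] at this
    rw [← this]
    refine lintegral_congr fun x => ?_
    simp only [hg_def, Homeomorph.symm_apply_apply]
  rw [step2]
  have hg_eq : ∀ p : sphere (0 : E3) 1 × Ioi (0:ℝ), g p = G (p.2.1 • (p.1.1 : E3)) := by
    intro p; simp only [hg_def, homeomorphUnitSphereProd_symm_apply_coe]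
  -- step 3: Fubini
  rw [lintegral_prod _ hg_meas.aemeasurable]
  -- step 4: inner bound, uniform in σ
  have inner_bound : ∀ σ : sphere (0 : E3) 1,
      (∫⁻ r, g (σ, r) ∂(Measure.volumeIoiPow 2)) ≤ ENNReal.ofReal (K * (1 + V)) := by
    intro σ
    set a : ℝ := (inner ℝ v (σ : E3) : ℝ) with ha_def
    have hσ : ‖(σ : E3)‖ = 1 := mem_sphere_zero_iff_norm.mp σ.2
    have ha : |a| ≤ V := by
      calc |a| ≤ ‖v‖ * ‖(σ : E3)‖ := abs_real_inner_le_norm v σ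
        _ = V := by rw [hσ, mul_one]
    set c' : ℝ := c * (2 / Real.sqrt β + V) with hc'_def
    have hc' : 0 ≤ c' := by positivity
    have hmeas2 : Measurable fun t : ℝ => ENNReal.ofReal (t^2) * G (t • (σ : E3)) :=
      ((measurable_id.pow_const 2).ennreal_ofReal).mul
        (hG.comp (measurable_id.smul_const (σ : E3)))
    calc (∫⁻ r, g (σ, r) ∂(Measure.volumeIoiPow 2))
        = ∫⁻ r : Ioi (0:ℝ), ENNReal.ofReal (r.1^2) * G (r.1 • (σ : E3))
            ∂(Measure.comap Subtype.val volume) := by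
          have hgm : Measurable fun r : Ioi (0:ℝ) => g (σ, r) :=
            hg_meas.comp measurable_prodMk_left
          rw [Measure.volumeIoiPow, lintegral_withDensity_eq_lintegral_mul _
            ((measurable_subtype_coe.pow_const 2).ennreal_ofReal) hgm]
          refine lintegral_congr fun r => ?_
          simp only [Pi.mul_apply, hg_eq]
      _ = ∫⁻ t in Ioi (0:ℝ), ENNReal.ofReal (t^2) * G (t • (σ : E3)) := by
          exact lintegral_subtype_comap measurableSet_Ioi
            (fun t : ℝ => ENNReal.ofReal (t^2) * G (t • (σ : E3)))
      _ ≤ ∫⁻ t in Ioi (0:ℝ), ENNReal.ofReal (c' * Real.exp (-(β/4) * (t + a)^2)) := by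
          refine setLIntegral_mono (by fun_prop) fun t ht => ?_
          have ht0 : (0:ℝ) < t := ht
          have hnorm : ‖t • (σ : E3)‖ = t := by
            rw [norm_smul, hσ, mul_one, Real.norm_eq_abs, abs_of_pos ht0]
          have hinn : (inner ℝ (v + t • (σ : E3)) (t • (σ : E3)) : ℝ) = t * a + t^2 := by
            rw [inner_add_left, real_inner_smul_right, real_inner_smul_left,
              real_inner_smul_right, real_inner_self_eq_norm_sq, hσ]
            ring
          have hdivs : (t * a + t^2) / t = a + t := by field_simp
          have hGval : G (t • (σ : E3)) =
              ENNReal.ofReal ((c * Real.exp (-(β/2) * (a + t)^2)) / t) := by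
            simp only [G, hnorm, hinn, hdivs]
          rw [hGval, ← ENNReal.ofReal_mul (by positivity)]
          refine ENNReal.ofReal_le_ofReal ?_
          have hval : t^2 * ((c * Real.exp (-(β/2) * (a + t)^2)) / t)
              = c * (Real.exp (-(β/2) * (a + t)^2) * t) := by
            field_simp
          rw [hval]
          have htle : t ≤ |a + t| + V := by
            have h1 := le_abs_self (a + t)
            have h2 := neg_le_abs a
            linarith
          calc c * (Real.exp (-(β/2) * (a + t)^2) * t)
              ≤ c * (Real.exp (-(β/2) * (a + t)^2) * (|a + t| + V)) := by
                have := Real.exp_pos (-(β/2) * (a + t)^2)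
                gcongr
            _ ≤ c * ((2/Real.sqrt β + V) * Real.exp (-(β/4) * (a + t)^2)) :=
                mul_le_mul_of_nonneg_left (gauss_ptwise β hβ (a + t) V hV) hc.le
            _ = c' * Real.exp (-(β/4) * (t + a)^2) := by rw [hc'_def, add_comm a t]; ring
      _ ≤ ∫⁻ t : ℝ, ENNReal.ofReal (c' * Real.exp (-(β/4) * (t + a)^2)) :=
          setLIntegral_le_lintegral _ _
      _ = ∫⁻ t : ℝ, ENNReal.ofReal (c' * Real.exp (-(β/4) * t^2)) :=
          lintegral_add_right_eq_self (fun t => ENNReal.ofReal (c' * Real.exp (-(β/4) * t^2))) a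
      _ = ENNReal.ofReal c' * ∫⁻ t : ℝ, ENNReal.ofReal (Real.exp (-(β/4) * t^2)) := by
          simp_rw [ENNReal.ofReal_mul hc']
          rw [lintegral_const_mul _ (by fun_prop)]
      _ = ENNReal.ofReal c' * ENNReal.ofReal I := by
          rw [← ofReal_integral_eq_lintegral_ofReal
            (integrable_exp_neg_mul_sq (by positivity : (0:ℝ) < β/4))
            (ae_of_all _ fun x => (Real.exp_pos _).le), integral_gaussian]
      _ = ENNReal.ofReal (c' * I) := by rw [← ENNReal.ofReal_mul hc']
      _ ≤ ENNReal.ofReal (K * (1 + V)) := by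
          refine ENNReal.ofReal_le_ofReal ?_
          rw [hc'_def, hK_def]
          have hd : (0:ℝ) ≤ 2 / Real.sqrt β := by positivity
          nlinarith [mul_nonneg (mul_nonneg hc.le hI.le) (mul_nonneg hd hV),
            mul_nonneg (mul_nonneg hc.le hI.le) hV, mul_nonneg hc.le hI.le]
  -- step 5: integrate the uniform bound over the sphere
  calc (∫⁻ σ, ∫⁻ r, g (σ, r) ∂(Measure.volumeIoiPow 2) ∂(volume : Measure E3).toSphere)
      ≤ ∫⁻ _, ENNReal.ofReal (K * (1 + V)) ∂(volume : Measure E3).toSphere :=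
        lintegral_mono inner_bound
    _ = ENNReal.ofReal (K * (1 + V)) * (volume : Measure E3).toSphere Set.univ := by
        rw [lintegral_const]
    _ ≤ ENNReal.ofReal (K * (1 + V)) * ENNReal.ofReal T := by
        rw [hT_def, ENNReal.ofReal_toReal (measure_ne_top _ _)]
    _ = ENNReal.ofReal (K * (1 + V) * T) := by
        rw [← ENNReal.ofReal_mul (by positivity)]
    _ ≤ ENNReal.ofReal (K * (T + 1) * (1 + V)) := by
        refine ENNReal.ofReal_le_ofReal ?_
        nlinarith [hK.le, hT, hV]
end
end

section
/- Let β > 0. There exists a constant C̃ > 0 (depending only on β) such that for every natural number k and every v ∈ ℝ³: ∫_{{v' ∈ ℝ³ : ‖v'‖ ≥ 2‖v‖}} (1+‖v'‖)^k · e(v,v')/‖v'−v‖ dv' ≤ C̃^(k+1) · Γ(k/2 + 2), where Γ is the Gamma function and the integrand is extended by 0 at v' = v. -/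
open MeasureTheory Set

noncomputable section

lemma lintegral_norm_E3 (f : ℝ → ENNReal) (hf : Measurable f) :
    ∫⁻ x : E3, f ‖x‖ = (volume : Measure E3).toSphere univ *
      ∫⁻ r in Ioi (0 : ℝ), ENNReal.ofReal (r ^ 2) * f r := by
  have hdim : Module.finrank ℝ E3 = 3 := finrank_euclideanSpace_fin
  have hm : Measurable (fun p : (Metric.sphere (0:E3) 1) × (Ioi (0:ℝ)) => f p.2) :=
    (hf.comp measurable_subtype_coe).comp measurable_snd
  have h1 : ∫⁻ x : ({0}ᶜ : Set E3), f ‖(x : E3)‖ ∂((volume : Measure E3).comap Subtype.val)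
      = ∫⁻ x : E3, f ‖x‖ := by
    rw [← setLIntegral_univ (fun x : ({0}ᶜ : Set E3)  => f ‖(x : E3)‖),
      setLIntegral_subtype (measurableSet_singleton (0:E3)).compl univ (fun x : E3 => f ‖x‖),
      image_univ, Subtype.range_coe, MeasureTheory.restrict_compl_singleton]
  rw [← h1]
  have h2 := ((volume : Measure E3).measurePreserving_homeomorphUnitSphereProd).lintegral_comp
    (f := fun p : (Metric.sphere (0:E3) 1) × (Ioi (0:ℝ)) => f p.2) hm
  rw [show (fun x : ({0}ᶜ : Set E3) => f ‖(x : E3)‖)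
      = fun x : ({0}ᶜ : Set E3) => f ((homeomorphUnitSphereProd E3 x).2 : ℝ) from by funext x; simp [homeomorphUnitSphereProd], h2, hdim]
  rw [lintegral_prod (fun p : (Metric.sphere (0:E3) 1) × (Ioi (0:ℝ)) => f p.2) hm.aemeasurable]
  simp only []
  rw [lintegral_const]
  have : ∫⁻ y : (Ioi (0:ℝ)), f y ∂(Measure.volumeIoiPow (3-1))
      = ∫⁻ r in Ioi (0:ℝ), ENNReal.ofReal (r ^ 2) * f r := by
    rw [Measure.volumeIoiPow, lintegral_withDensity_eq_lintegral_mul _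
      (by exact ((measurable_subtype_coe.pow_const _).ennreal_ofReal) :
        Measurable fun r : Ioi (0:ℝ) => ENNReal.ofReal (r.1 ^ (3-1)))
      (g := fun y : Ioi (0:ℝ) => f y) (hf.comp measurable_subtype_coe)]
    simp only [Pi.mul_apply]
    rw [← setLIntegral_univ (fun a : Ioi (0:ℝ) => ENNReal.ofReal (a.1 ^ (3-1)) * f a.1),
      setLIntegral_subtype measurableSet_Ioi univ (fun r : ℝ => ENNReal.ofReal (r ^ (3-1)) * f r),
      image_univ, Subtype.range_coe]
  rw [this, mul_comm]

set_option maxHeartbeats 1000000 in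
/-- There is a constant `C̃ > 0` (depending only on `β`) such that for every `k : ℕ` and
every `v`, `∫_{‖v'‖ ≥ 2‖v‖} (1+‖v'‖)^k e(v,v')/‖v'−v‖ dv' ≤ C̃^(k+1) · Γ(k/2 + 2)`
(the integrand extended by `0` at `v' = v`, automatic by the convention `x/0 = 0`). -/
theorem large_velocity_moment_bound (β : ℝ) (hβ : 0 < β) :
    ∃ Ct : ℝ, 0 < Ct ∧ ∀ (k : ℕ) (v : E3),
      (∫⁻ v' in {v' : E3 | 2 * ‖v‖ ≤ ‖v'‖},
          ENNReal.ofReal ((1 + ‖v'‖) ^ k * eFun β v v' / ‖v' - v‖)) ≤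
        ENNReal.ofReal (Ct ^ (k + 1) * Real.Gamma ((k : ℝ) / 2 + 2)) := by
  set a : ℝ := β / 18 with ha_def
  have ha : 0 < a := by positivity
  set c : ℝ := (β / (2 * Real.pi)) ^ ((1 : ℝ) / 2) with hc_def
  have hc : 0 < c := Real.rpow_pos_of_pos (by positivity) _
  set s : ℝ := ((volume : Measure E3).toSphere univ).toReal with hs_def
  have hs0 : 0 ≤ s := ENNReal.toReal_nonneg
  set D : ℝ := max 1 (a ^ (-(1:ℝ)/2)) with hD_def
  have hD1 : (1:ℝ) ≤ D := le_max_left _ _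
  have hD2 : a ^ (-(1:ℝ)/2) ≤ D := le_max_right _ _
  have hDpos : 0 < D := lt_of_lt_of_le one_pos hD1
  set K : ℝ := s * c * (Real.sqrt Real.pi + 1) * D with hK_def
  refine ⟨2 * D * max 1 K, by positivity, fun k v => ?_⟩
  set Ct : ℝ := 2 * D * max 1 K with hCt_def
  -- the radial bound function
  set F : ℝ → ℝ := fun r => 2 * c * (1 + r) ^ k * Real.exp (-a * r ^ 2) / r with hF_def
  have hFnonneg : ∀ r : ℝ, 0 ≤ r → 0 ≤ F r := by
    intro r hr
    apply div_nonneg _ hr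
    have h1 : (0:ℝ) ≤ 1 + r := by linarith
    positivity
  have hFmeas : Measurable fun r : ℝ => ENNReal.ofReal (F r) := by
    apply Measurable.ennreal_ofReal
    apply Measurable.div
    · fun_prop
    · fun_prop
  -- pointwise bound
  have hpt : ∀ v' ∈ {v' : E3 | 2 * ‖v‖ ≤ ‖v'‖},
      ENNReal.ofReal ((1 + ‖v'‖) ^ k * eFun β v v' / ‖v' - v‖) ≤
      ENNReal.ofReal (F ‖v'‖) := by
    intro v' hv'
    apply ENNReal.ofReal_le_ofReal
    by_cases hvv : v' = v
    · subst hvv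
      simp only [sub_self, norm_zero, div_zero]
      exact hFnonneg _ (norm_nonneg _)
    · set r : ℝ := ‖v'‖ with hr_def
      have hvr : 2 * ‖v‖ ≤ r := hv'
      have hw0 : v' - v ≠ 0 := sub_ne_zero.mpr hvv
      have hwpos : 0 < ‖v' - v‖ := norm_pos_iff.mpr hw0
      have h2 : ‖v' - v‖ ≤ 3/2 * r := by
        have := norm_sub_le v' v; have hnv := norm_nonneg v; linarith
      have hr : 0 < r := by nlinarith
      have h1 : r/2 ≤ ‖v' - v‖ := by
        have := norm_sub_norm_le v' v; linarith
      have hinner : r^2/2 ≤ (inner ℝ v' (v' - v) : ℝ) := by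
        have e1 : (inner ℝ v' (v' - v) : ℝ) = ‖v'‖^2 - inner ℝ v' v := by
          rw [inner_sub_right, real_inner_self_eq_norm_sq]
        have e2 : (inner ℝ v' v : ℝ) ≤ ‖v'‖ * ‖v‖ := real_inner_le_norm _ _
        nlinarith
      have ht : r/3 ≤ (inner ℝ v' (v' - v) : ℝ) / ‖v' - v‖ := by
        rw [le_div_iff₀ hwpos]; nlinarith
      have ht2 : r^2/9 ≤ ((inner ℝ v' (v' - v) : ℝ) / ‖v' - v‖)^2 := by nlinarith
      have hexp : Real.exp (-(β/2) * ((inner ℝ v' (v' - v) : ℝ) / ‖v' - v‖)^2)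
          ≤ Real.exp (-a * r^2) := by
        apply Real.exp_le_exp.2; rw [ha_def]; nlinarith
      have h1r : (0:ℝ) ≤ 1 + r := by linarith
      calc (1 + r) ^ k * eFun β v v' / ‖v' - v‖
          ≤ (1 + r) ^ k * (c * Real.exp (-a * r^2)) / (r/2) := by
            apply div_le_div₀ (by positivity) _ (by linarith) h1
            rw [eFun, ← hc_def]
            have hk : (0:ℝ) ≤ (1 + r)^k := by positivity
            exact mul_le_mul_of_nonneg_left (mul_le_mul_of_nonneg_left hexp hc.le) hk
        _ = F r := by rw [hF_def]; field_simp
  -- the main chain in ℝ≥0∞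
  have hS : (volume : Measure E3).toSphere univ ≠ ⊤ := measure_ne_top _ _
  -- 1-D integrands
  set G : ℝ → ℝ := fun r =>
    2 * c * 2 ^ (k+1) * (Real.exp (-a * r^2) + r^(k+1) * Real.exp (-a * r^2)) with hG_def
  have hInt1 : IntegrableOn (fun r : ℝ => Real.exp (-a * r^2)) (Ioi 0) volume :=
    (integrable_exp_neg_mul_sq ha).integrableOn
  have hInt2 : IntegrableOn (fun r : ℝ => r^(k+1) * Real.exp (-a * r^2)) (Ioi 0) volume := by
    have h := integrableOn_rpow_mul_exp_neg_mul_sq ha (s := ((k:ℝ)+1))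
      (by have := Nat.cast_nonneg (α := ℝ) k; linarith)
    apply h.congr_fun _ measurableSet_Ioi
    intro x hx
    show x ^ ((k:ℝ)+1) * Real.exp (-a * x^2) = x ^ (k+1) * Real.exp (-a * x^2)
    rw [show ((k:ℝ)+1) = (((k+1:ℕ)):ℝ) by push_cast; ring, Real.rpow_natCast]
  have hGint : IntegrableOn G (Ioi 0) volume := by
    rw [hG_def]
    exact ((hInt1.add hInt2).const_mul _)
  have hGnonneg : ∀ r ∈ Ioi (0:ℝ), 0 ≤ G r := by
    intro r hr
    have hr0 : (0:ℝ) < r := hr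
    rw [hG_def]; positivity
  -- values of the 1-D integrals
  have hA : ∫ r in Ioi (0:ℝ), Real.exp (-a * r^2)
      = a ^ (-(1:ℝ)/2) * (1/2) * Real.sqrt Real.pi := by
    have h := integral_rpow_mul_exp_neg_mul_rpow (p := 2) (q := 0) two_pos (by norm_num) ha
    rw [← Real.Gamma_one_half_eq]
    rw [show -((0:ℝ)+1)/2 = -(1:ℝ)/2 by norm_num, show ((0:ℝ)+1)/2 = 1/2 by norm_num] at h
    rw [← h]
    apply setIntegral_congr_fun measurableSet_Ioi
    intro x hx
    show Real.exp (-a * x^2) = x ^ (0:ℝ) * Real.exp (-a * x ^ (2:ℝ))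
    rw [Real.rpow_zero, one_mul, show x ^ (2:ℝ) = x ^ (2:ℕ) by
      rw [← Real.rpow_natCast x 2]; norm_num]
  have hB : ∫ r in Ioi (0:ℝ), r^(k+1) * Real.exp (-a * r^2)
      = a ^ (-((k:ℝ)+2)/2) * (1/2) * Real.Gamma ((k:ℝ)/2 + 1) := by
    have h := integral_rpow_mul_exp_neg_mul_rpow (p := 2) (q := ((k:ℝ)+1)) two_pos
      (by have := Nat.cast_nonneg (α := ℝ) k; linarith) ha
    rw [show (((k:ℝ)+1)+1)/2 = (k:ℝ)/2 + 1 by ring, show -(((k:ℝ)+1)+1)/2 = -((k:ℝ)+2)/2 by ring]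
      at h
    rw [← h]
    apply setIntegral_congr_fun measurableSet_Ioi
    intro x hx
    show x^(k+1) * Real.exp (-a * x^2) = x ^ ((k:ℝ)+1) * Real.exp (-a * x ^ (2:ℝ))
    rw [show ((k:ℝ)+1) = (((k+1:ℕ)):ℝ) by push_cast; ring, Real.rpow_natCast,
      show x ^ (2:ℝ) = x ^ (2:ℕ) by rw [← Real.rpow_natCast x 2]; norm_num]
  -- Gamma facts
  have hΓpos : 0 < Real.Gamma ((k:ℝ)/2 + 2) := Real.Gamma_pos_of_pos (by positivity)
  have hk0 : (0:ℝ) ≤ (k:ℝ) := Nat.cast_nonneg k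
  have hΓ1 : (1:ℝ) ≤ Real.Gamma ((k:ℝ)/2 + 2) := by
    rw [← Real.Gamma_two]
    exact Real.Gamma_strictMonoOn_Ici.monotoneOn (by simp [mem_Ici])
      (by simp only [mem_Ici]; linarith) (by linarith)
  have hΓ2 : Real.Gamma ((k:ℝ)/2 + 1) ≤ Real.Gamma ((k:ℝ)/2 + 2) := by
    have h := Real.Gamma_add_one (s := (k:ℝ)/2 + 1) (by positivity)
    rw [show (k:ℝ)/2 + 1 + 1 = (k:ℝ)/2 + 2 by ring] at h
    have hp : 0 < Real.Gamma ((k:ℝ)/2 + 1) := Real.Gamma_pos_of_pos (by positivity)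
    nlinarith
  -- power facts
  have hDpow : a ^ (-((k:ℝ)+2)/2) ≤ D^(k+2) := by
    have : a ^ (-((k:ℝ)+2)/2) = (a ^ (-(1:ℝ)/2))^(k+2) := by
      rw [← Real.rpow_natCast (a ^ (-(1:ℝ)/2)) (k+2), ← Real.rpow_mul ha.le]
      congr 1; push_cast; ring
    rw [this]
    exact pow_le_pow_left₀ (Real.rpow_nonneg ha.le _) hD2 _
  have hDD : D ≤ D^(k+2) := le_self_pow₀ hD1 (by omega)
  have hDhalf : a ^ (-(1:ℝ)/2) ≤ D^(k+2) := le_trans hD2 hDD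
  -- the real-valued final bound
  have hreal : s * ∫ r in Ioi (0:ℝ), G r ≤ Ct ^ (k+1) * Real.Gamma ((k:ℝ)/2 + 2) := by
    rw [hG_def]
    rw [integral_const_mul, integral_add hInt1 hInt2, hA, hB]
    have hsqrtpi : 0 < Real.sqrt Real.pi := Real.sqrt_pos.mpr Real.pi_pos
    have step1 : a ^ (-(1:ℝ)/2) * (1/2) * Real.sqrt Real.pi
          + a ^ (-((k:ℝ)+2)/2) * (1/2) * Real.Gamma ((k:ℝ)/2 + 1)
        ≤ (1/2) * D^(k+2) * (Real.sqrt Real.pi + 1) * Real.Gamma ((k:ℝ)/2 + 2) := by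
      have hDk : (0:ℝ) < D^(k+2) := pow_pos hDpos (k+2)
      have b1 : a ^ (-(1:ℝ)/2) * (1/2) * Real.sqrt Real.pi
          ≤ (1/2) * D^(k+2) * Real.sqrt Real.pi * Real.Gamma ((k:ℝ)/2 + 2) := by
        have t1 := mul_le_mul_of_nonneg_right hDhalf hsqrtpi.le
        have t2 : D^(k+2) * Real.sqrt Real.pi
            ≤ D^(k+2) * Real.sqrt Real.pi * Real.Gamma ((k:ℝ)/2 + 2) :=
          le_mul_of_one_le_right (by positivity) hΓ1
        nlinarith
      have b2 : a ^ (-((k:ℝ)+2)/2) * (1/2) * Real.Gamma ((k:ℝ)/2 + 1)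
          ≤ (1/2) * D^(k+2) * Real.Gamma ((k:ℝ)/2 + 2) := by
        have hΓp : 0 < Real.Gamma ((k:ℝ)/2 + 1) := Real.Gamma_pos_of_pos (by positivity)
        have hap : 0 ≤ a ^ (-((k:ℝ)+2)/2) := Real.rpow_nonneg ha.le _
        have t1 : a ^ (-((k:ℝ)+2)/2) * Real.Gamma ((k:ℝ)/2 + 1)
            ≤ D^(k+2) * Real.Gamma ((k:ℝ)/2 + 1) :=
          mul_le_mul_of_nonneg_right hDpow hΓp.le
        have t2 : D^(k+2) * Real.Gamma ((k:ℝ)/2 + 1)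
            ≤ D^(k+2) * Real.Gamma ((k:ℝ)/2 + 2) :=
          mul_le_mul_of_nonneg_left hΓ2 hDk.le
        nlinarith
      nlinarith
    have step2 : 2 * c * 2^(k+1) *
          ((1/2) * D^(k+2) * (Real.sqrt Real.pi + 1) * Real.Gamma ((k:ℝ)/2 + 2))
        = (c * (Real.sqrt Real.pi + 1) * D) * ((2*D)^(k+1)) * Real.Gamma ((k:ℝ)/2 + 2) := by
      rw [show k+2 = (k+1)+1 from rfl, pow_succ, mul_pow]
      ring
    have step3 : s * (2 * c * 2^(k+1) *
          ((1/2) * D^(k+2) * (Real.sqrt Real.pi + 1) * Real.Gamma ((k:ℝ)/2 + 2)))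
        ≤ Ct ^ (k+1) * Real.Gamma ((k:ℝ)/2 + 2) := by
      rw [step2, hCt_def]
      have hKle : K ≤ max 1 K := le_max_right _ _
      have hmax1 : (1:ℝ) ≤ max 1 K := le_max_left _ _
      have hmaxpow : max 1 K ≤ (max 1 K)^(k+1) := le_self_pow₀ hmax1 (by omega)
      calc s * ((c * (Real.sqrt Real.pi + 1) * D) * ((2*D)^(k+1)) * Real.Gamma ((k:ℝ)/2 + 2))
          = K * ((2*D)^(k+1)) * Real.Gamma ((k:ℝ)/2 + 2) := by rw [hK_def]; ring
        _ ≤ (max 1 K)^(k+1) * ((2*D)^(k+1)) * Real.Gamma ((k:ℝ)/2 + 2) := by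
            have hK2 : K ≤ (max 1 K)^(k+1) := le_trans hKle hmaxpow
            have h2D : (0:ℝ) < (2*D)^(k+1) := by positivity
            nlinarith [mul_le_mul_of_nonneg_right hK2
              (mul_nonneg h2D.le hΓpos.le)]
        _ = (2 * D * max 1 K)^(k+1) * Real.Gamma ((k:ℝ)/2 + 2) := by
            rw [mul_pow (2*D) (max 1 K)]; ring
    calc s * (2 * c * 2^(k+1) * (a ^ (-(1:ℝ)/2) * (1/2) * Real.sqrt Real.pi
            + a ^ (-((k:ℝ)+2)/2) * (1/2) * Real.Gamma ((k:ℝ)/2 + 1)))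
        ≤ s * (2 * c * 2^(k+1) *
            ((1/2) * D^(k+2) * (Real.sqrt Real.pi + 1) * Real.Gamma ((k:ℝ)/2 + 2))) := by
          apply mul_le_mul_of_nonneg_left _ hs0
          apply mul_le_mul_of_nonneg_left step1 (by positivity)
      _ ≤ Ct ^ (k+1) * Real.Gamma ((k:ℝ)/2 + 2) := step3
  -- now the ENNReal chain
  calc (∫⁻ v' in {v' : E3 | 2 * ‖v‖ ≤ ‖v'‖},
          ENNReal.ofReal ((1 + ‖v'‖) ^ k * eFun β v v' / ‖v' - v‖))
      ≤ ∫⁻ v' in {v' : E3 | 2 * ‖v‖ ≤ ‖v'‖}, ENNReal.ofReal (F ‖v'‖) :=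
        setLIntegral_mono (hFmeas.comp measurable_norm) hpt
    _ ≤ ∫⁻ v' : E3, ENNReal.ofReal (F ‖v'‖) := setLIntegral_le_lintegral _ _
    _ = (volume : Measure E3).toSphere univ *
          ∫⁻ r in Ioi (0:ℝ), ENNReal.ofReal (r^2) * ENNReal.ofReal (F r) :=
        lintegral_norm_E3 _ hFmeas
    _ ≤ (volume : Measure E3).toSphere univ *
          ∫⁻ r in Ioi (0:ℝ), ENNReal.ofReal (G r) := by
        apply mul_le_mul_right
        apply setLIntegral_mono (by fun_prop)
        intro r hr
        have hr0 : (0:ℝ) < r := hr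
        rw [← ENNReal.ofReal_mul (sq_nonneg r)]
        apply ENNReal.ofReal_le_ofReal
        have hfr : r^2 * F r = 2 * c * ((1+r)^k * r) * Real.exp (-a * r^2) := by
          rw [hF_def]; field_simp
        rw [hfr]
        show 2 * c * ((1+r)^k * r) * Real.exp (-a * r^2)
          ≤ 2 * c * 2^(k+1) * (Real.exp (-a * r^2) + r^(k+1) * Real.exp (-a * r^2))
        have h1r : (0:ℝ) ≤ 1 + r := by linarith
        have key : (1+r)^k * r ≤ 2^(k+1) * (1 + r^(k+1)) := by
          have k1 : (1+r)^k * r ≤ (1+r)^(k+1) := by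
            rw [pow_succ]
            apply mul_le_mul_of_nonneg_left (by linarith) (by positivity)
          have k2 : (1+r)^(k+1) ≤ 2^(k+1) * (1 + r^(k+1)) := by
            rcases le_total r 1 with h|h
            · calc (1+r)^(k+1) ≤ 2^(k+1) := pow_le_pow_left₀ h1r (by linarith) _
                _ ≤ 2^(k+1) * (1 + r^(k+1)) := by
                    have : (0:ℝ) ≤ r^(k+1) := by positivity
                    nlinarith [pow_pos (show (0:ℝ) < 2 by norm_num) (k+1)]
            · calc (1+r)^(k+1) ≤ (2*r)^(k+1) := pow_le_pow_left₀ h1r (by linarith) _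
                _ = 2^(k+1) * r^(k+1) := mul_pow 2 r (k+1)
                _ ≤ 2^(k+1) * (1 + r^(k+1)) := by
                    have : (0:ℝ) < 2^(k+1) := by positivity
                    nlinarith
          linarith
        have hexp0 : (0:ℝ) < Real.exp (-a * r^2) := Real.exp_pos _
        have hkey2 := mul_le_mul_of_nonneg_left
          (mul_le_mul_of_nonneg_right key hexp0.le) (by positivity : (0:ℝ) ≤ 2*c)
        nlinarith [hkey2]
    _ = (volume : Measure E3).toSphere univ * ENNReal.ofReal (∫ r in Ioi (0:ℝ), G r) := by
        rw [ofReal_integral_eq_lintegral_ofReal hGint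
          ((ae_restrict_iff' measurableSet_Ioi).mpr (ae_of_all _ hGnonneg))]
    _ = ENNReal.ofReal (s * ∫ r in Ioi (0:ℝ), G r) := by
        rw [ENNReal.ofReal_mul hs0, hs_def, ENNReal.ofReal_toReal hS]
    _ ≤ ENNReal.ofReal (Ct ^ (k+1) * Real.Gamma ((k:ℝ)/2 + 2)) :=
        ENNReal.ofReal_le_ofReal hreal
end
end

section
/- Let v, v₁ ∈ ℝ³ with v₁ ≠ v and ‖v‖ ≤ ‖v₁‖/2. Then v₁·(v₁ − v) ≥ (1/2)·‖v₁‖·‖v₁ − v‖. Consequently, for every β > 0, e(v, v₁) ≤ (β/(2π))^(1/2) · exp(−β·‖v₁‖²/8). -/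
open MeasureTheory

noncomputable section

/-- If `v₁ ≠ v` and `‖v‖ ≤ ‖v₁‖/2` then `v₁·(v₁−v) ≥ (1/2)‖v₁‖‖v₁−v‖`, and consequently
`e(v,v₁) ≤ (β/(2π))^(1/2) · exp(−β‖v₁‖²/8)` for every `β > 0`. -/
theorem eFun_gaussian_decay (v v₁ : E3) (hne : v₁ ≠ v) (hv : ‖v‖ ≤ ‖v₁‖ / 2) :
    (1 / 2) * ‖v₁‖ * ‖v₁ - v‖ ≤ (inner ℝ v₁ (v₁ - v) : ℝ) ∧
    ∀ β : ℝ, 0 < β →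
      eFun β v v₁ ≤ (β / (2 * Real.pi)) ^ ((1 : ℝ) / 2) *
        Real.exp (-β * ‖v₁‖ ^ 2 / 8) := by
  have hnorm : ‖v₁ - v‖ ^ 2 = ‖v₁‖ ^ 2 - 2 * (inner ℝ v₁ v : ℝ) + ‖v‖ ^ 2 := by
    rw [norm_sub_sq_real]
  have hinner : (inner ℝ v₁ (v₁ - v) : ℝ) = ‖v₁‖ ^ 2 - (inner ℝ v₁ v : ℝ) := by
    rw [inner_sub_right, real_inner_self_eq_norm_sq]
  have hpos : (0 : ℝ) < ‖v₁ - v‖ := by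
    rw [norm_pos_iff]; exact sub_ne_zero.mpr hne
  have hv0 : (0 : ℝ) ≤ ‖v‖ := norm_nonneg _
  have h1 : (1 / 2) * ‖v₁‖ * ‖v₁ - v‖ ≤ (inner ℝ v₁ (v₁ - v) : ℝ) := by
    nlinarith [sq_nonneg (‖v₁ - v‖ - ‖v₁‖ / 2), sq_nonneg (‖v₁‖ - 2 * ‖v‖),
      norm_nonneg v₁, hpos.le]
  refine ⟨h1, fun β hβ => ?_⟩
  have hC : (0 : ℝ) ≤ (β / (2 * Real.pi)) ^ ((1 : ℝ) / 2) :=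
    Real.rpow_nonneg (by positivity) _
  unfold eFun
  apply mul_le_mul_of_nonneg_left _ hC
  apply Real.exp_le_exp.mpr
  have hratio : (1 / 2) * ‖v₁‖ ≤ (inner ℝ v₁ (v₁ - v) : ℝ) / ‖v₁ - v‖ := by
    rw [le_div_iff₀ hpos]
    linarith [h1]
  have hnn : (0 : ℝ) ≤ (1 / 2) * ‖v₁‖ := by positivity
  have hsq : ((1 / 2) * ‖v₁‖) ^ 2 ≤ ((inner ℝ v₁ (v₁ - v) : ℝ) / ‖v₁ - v‖) ^ 2 :=
    pow_le_pow_left₀ hnn hratio 2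
  nlinarith [hsq]
end
end

section
/- Let β > 0. For all x, v ∈ ℝ³, all ε > 0 and all T ≥ 0: ∫_{ℝ³} M_β(w) · vol({y ∈ ℝ³ : ∃ s ∈ [0,T], ‖y + s·w − x − s·v‖ ≤ ε}) dw ≤ ε²·λ(v)·T + (4/3)·π·ε³. -/
open MeasureTheory

noncomputable section

namespace TubeAux

def e0 : E3 := EuclideanSpace.single 0 1

lemma norm_le_iff_coords {ε : ℝ} (hε : 0 ≤ ε) (z : E3) :
    ‖z‖ ≤ ε ↔ (z 0)^2 + (z 1)^2 + (z 2)^2 ≤ ε^2 := by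
  rw [EuclideanSpace.norm_eq, Fin.sum_univ_three]
  simp only [Real.norm_eq_abs, sq_abs]
  rw [show ε = Real.sqrt (ε^2) by rw [Real.sqrt_sq hε]]
  rw [Real.sqrt_le_sqrt_iff (by positivity), Real.sqrt_sq hε]

lemma coords_add_smul (z : E3) (t : ℝ) :
    (z + t • e0) 0 = z 0 + t ∧ (z + t • e0) 1 = z 1 ∧ (z + t • e0) 2 = z 2 := by
  refine ⟨?_, ?_, ?_⟩ <;>
    simp [e0, PiLp.add_apply, PiLp.smul_apply, EuclideanSpace.single_apply]

lemma hyperplane_null : volume {z : E3 | z 0 = 0} = 0 := by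
  have h : {z : E3 | z 0 = 0} =
      (LinearMap.ker ((EuclideanSpace.proj (0 : Fin 3) : E3 →L[ℝ] ℝ).toLinearMap) : Set E3) := by
    ext z
    simp [LinearMap.mem_ker, PiLp.proj_apply]
  rw [h]
  apply Measure.addHaar_submodule
  intro htop
  have h1 : (EuclideanSpace.single (0 : Fin 3) (1:ℝ)) ∈
      LinearMap.ker ((EuclideanSpace.proj (0 : Fin 3) : E3 →L[ℝ] ℝ).toLinearMap) := htop ▸ trivial
  simp [LinearMap.mem_ker] at h1

lemma ball3_vol {ε : ℝ} (hε : 0 ≤ ε) (x : E3) :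
    volume (Metric.closedBall x ε) = ENNReal.ofReal (4 / 3 * Real.pi * ε^3) := by
  rw [EuclideanSpace.volume_closedBall]
  simp only [Fintype.card_fin]
  have hG : Real.Gamma (((3:ℕ):ℝ) / 2 + 1) = 3 / 4 * Real.sqrt Real.pi := by
    have h32 : ((3:ℕ):ℝ) / 2 + 1 = 3/2 + 1 := by norm_num
    rw [h32, Real.Gamma_add_one (by norm_num)]
    have h12 : (3:ℝ)/2 = 1/2 + 1 := by norm_num
    rw [h12, Real.Gamma_add_one (by norm_num), Real.Gamma_one_half_eq]
    ring
  rw [hG, ← ENNReal.ofReal_pow hε, ← ENNReal.ofReal_mul (by positivity)]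
  congr 1
  have hπ : (0:ℝ) < Real.sqrt Real.pi := Real.sqrt_pos.mpr Real.pi_pos
  have h3 : Real.sqrt Real.pi ^ 3 = Real.pi * Real.sqrt Real.pi := by
    rw [pow_succ, Real.sq_sqrt Real.pi_nonneg]
  rw [h3]
  field_simp

lemma pi_cyl_vol {ε L : ℝ} (hε : 0 ≤ ε) :
    volume {f : Fin 3 → ℝ | f 0 ∈ Set.Icc (-L) 0 ∧ (f 1)^2 + (f 2)^2 ≤ ε^2}
      = ENNReal.ofReal L * ENNReal.ofReal (Real.pi * ε^2) := by
  have disk_vol : volume {g : Fin 2 → ℝ | (g 0)^2 + (g 1)^2 ≤ ε^2}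
      = ENNReal.ofReal (Real.pi * ε^2) := by
    have hD : MeasurableSet {g : Fin 2 → ℝ | (g 0)^2 + (g 1)^2 ≤ ε^2} := by
      apply measurableSet_le <;> fun_prop
    have hmp := (EuclideanSpace.volume_preserving_symm_measurableEquiv_toLp (Fin 2)).measure_preimage
      hD.nullMeasurableSet
    have hpre : (MeasurableEquiv.toLp 2 (Fin 2 → ℝ)).symm ⁻¹'
        {g : Fin 2 → ℝ | (g 0)^2 + (g 1)^2 ≤ ε^2}
        = Metric.closedBall (0 : EuclideanSpace ℝ (Fin 2)) ε := by
      ext z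
      simp only [Set.mem_preimage, Set.mem_setOf_eq, Metric.mem_closedBall, dist_zero_right]
      rw [EuclideanSpace.norm_eq, Fin.sum_univ_two]
      simp only [Real.norm_eq_abs, sq_abs]
      rw [show ε = Real.sqrt (ε^2) by rw [Real.sqrt_sq hε]]
      rw [Real.sqrt_le_sqrt_iff (by positivity), Real.sqrt_sq hε]
      exact Iff.rfl
    rw [hpre] at hmp
    rw [← hmp, EuclideanSpace.volume_closedBall]
    simp only [Fintype.card_fin]
    have h2 : ((2:ℕ):ℝ) / 2 + 1 = 2 := by norm_num
    rw [h2, Real.Gamma_two, Real.sq_sqrt Real.pi_nonneg, div_one,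
      ← ENNReal.ofReal_pow hε, ← ENNReal.ofReal_mul (by positivity), mul_comm]
  have hDm : MeasurableSet {g : Fin 2 → ℝ | (g 0)^2 + (g 1)^2 ≤ ε^2} := by
    apply measurableSet_le <;> fun_prop
  set e := MeasurableEquiv.piFinSuccAbove (fun _ : Fin 3 => ℝ) 0 with he
  have hmp := measurePreserving_piFinSuccAbove (fun _ : Fin 3 => (volume : Measure ℝ)) 0
  have hset : {f : Fin 3 → ℝ | f 0 ∈ Set.Icc (-L) 0 ∧ (f 1)^2 + (f 2)^2 ≤ ε^2}
      = e ⁻¹' ((Set.Icc (-L) 0) ×ˢ {g : Fin 2 → ℝ | (g 0)^2 + (g 1)^2 ≤ ε^2}) := by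
    ext f
    simp only [Set.mem_preimage, Set.mem_prod, Set.mem_setOf_eq, he,
      MeasurableEquiv.piFinSuccAbove_apply]
    exact Iff.rfl
  rw [hset, volume_pi,
    hmp.measure_preimage ((measurableSet_Icc.prod hDm).nullMeasurableSet),
    Measure.prod_prod, ← volume_pi, disk_vol, Real.volume_Icc]
  norm_num

lemma cyl_vol {ε L : ℝ} (hε : 0 ≤ ε) :
    volume {z : E3 | z 0 ∈ Set.Icc (-L) 0 ∧ (z 1)^2 + (z 2)^2 ≤ ε^2}
      = ENNReal.ofReal L * ENNReal.ofReal (Real.pi * ε^2) := by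
  have hA : MeasurableSet {f : Fin 3 → ℝ | f 0 ∈ Set.Icc (-L) 0 ∧ (f 1)^2 + (f 2)^2 ≤ ε^2} := by
    rw [Set.setOf_and]
    refine MeasurableSet.inter (measurableSet_preimage (measurable_pi_apply 0) measurableSet_Icc) ?_
    apply measurableSet_le <;> fun_prop
  have hmp := (EuclideanSpace.volume_preserving_symm_measurableEquiv_toLp (Fin 3)).measure_preimage
    hA.nullMeasurableSet
  have hpre : (MeasurableEquiv.toLp 2 (Fin 3 → ℝ)).symm ⁻¹'
      {f : Fin 3 → ℝ | f 0 ∈ Set.Icc (-L) 0 ∧ (f 1)^2 + (f 2)^2 ≤ ε^2}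
      = {z : E3 | z 0 ∈ Set.Icc (-L) 0 ∧ (z 1)^2 + (z 2)^2 ≤ ε^2} := rfl
  rw [hpre] at hmp
  rw [hmp, pi_cyl_vol hε]

lemma capsule_vol_le {ε L : ℝ} (hε : 0 < ε) (hL : 0 ≤ L) :
    volume {z : E3 | ∃ t ∈ Set.Icc (0:ℝ) L, ‖z + t • e0‖ ≤ ε}
      ≤ ENNReal.ofReal (Real.pi * ε^2 * L + 4/3 * Real.pi * ε^3) := by
  classical
  set B : Set E3 := Metric.closedBall 0 ε with hB
  set C : Set E3 := {z | z 0 ∈ Set.Icc (-L) 0 ∧ (z 1)^2 + (z 2)^2 ≤ ε^2} with hC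
  have hsub : {z : E3 | ∃ t ∈ Set.Icc (0:ℝ) L, ‖z + t • e0‖ ≤ ε} ⊆
      C ∪ ((B ∩ {z : E3 | 0 ≤ z 0}) ∪ ((fun z => z + L • e0) ⁻¹' (B ∩ {z : E3 | z 0 ≤ 0}))) := by
    rintro z ⟨t, ⟨ht0, htL⟩, hn⟩
    obtain ⟨c0, c1, c2⟩ := coords_add_smul z t
    rw [norm_le_iff_coords hε.le, c0, c1, c2] at hn
    rcases le_or_gt (z 0) 0 with h1 | h1
    · rcases le_or_gt (-L) (z 0) with h2 | h2
      · exact Or.inl ⟨⟨h2, h1⟩, by nlinarith⟩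
      · refine Or.inr (Or.inr ?_)
        obtain ⟨d0, d1, d2⟩ := coords_add_smul z L
        refine ⟨mem_closedBall_zero_iff.mpr ?_, ?_⟩
        · show ‖z + L • e0‖ ≤ ε
          rw [norm_le_iff_coords hε.le, d0, d1, d2]
          nlinarith
        · show (z + L • e0) 0 ≤ 0
          rw [d0]; linarith
    · refine Or.inr (Or.inl ⟨mem_closedBall_zero_iff.mpr ?_, h1.le⟩)
      rw [norm_le_iff_coords hε.le]
      nlinarith
  have htrans : volume ((fun z => z + L • e0) ⁻¹' (B ∩ {z : E3 | z 0 ≤ 0}))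
      = volume (B ∩ {z : E3 | z 0 ≤ 0}) :=
    measure_preimage_add_right volume (L • e0) (B ∩ {z : E3 | z 0 ≤ 0})
  have hplus : volume (B ∩ {z : E3 | 0 ≤ z 0}) ≤ volume (B ∩ {z : E3 | 0 < z 0}) := by
    have hss : B ∩ {z : E3 | 0 ≤ z 0} ⊆ (B ∩ {z : E3 | 0 < z 0}) ∪ {z : E3 | z 0 = 0} := by
      rintro z ⟨hz, hz0⟩
      have hz0' : (0:ℝ) ≤ z 0 := hz0
      rcases lt_or_eq_of_le hz0' with h | h
      · exact Or.inl ⟨hz, h⟩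
      · exact Or.inr h.symm
    calc volume (B ∩ {z : E3 | 0 ≤ z 0}) ≤ volume ((B ∩ {z : E3 | 0 < z 0}) ∪ {z : E3 | z 0 = 0}) :=
          measure_mono hss
      _ ≤ volume (B ∩ {z : E3 | 0 < z 0}) + volume {z : E3 | z 0 = 0} := measure_union_le _ _
      _ = volume (B ∩ {z : E3 | 0 < z 0}) := by rw [hyperplane_null, add_zero]
  have hsplit : volume (B ∩ {z : E3 | 0 < z 0}) + volume (B ∩ {z : E3 | z 0 ≤ 0}) = volume B := by
    have hU : MeasurableSet {z : E3 | 0 < z 0} := by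
      apply measurableSet_lt <;> fun_prop
    have hd : B \ {z : E3 | 0 < z 0} = B ∩ {z : E3 | z 0 ≤ 0} := by
      rw [Set.diff_eq]
      congr 1
      ext z; simp [not_lt]
    rw [← hd]
    exact measure_inter_add_diff B hU
  calc volume {z : E3 | ∃ t ∈ Set.Icc (0:ℝ) L, ‖z + t • e0‖ ≤ ε}
      ≤ volume C + (volume (B ∩ {z : E3 | 0 ≤ z 0}) +
          volume ((fun z => z + L • e0) ⁻¹' (B ∩ {z : E3 | z 0 ≤ 0}))) :=
        le_trans (measure_mono hsub) (le_trans (measure_union_le _ _)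
          (add_le_add le_rfl (measure_union_le _ _)))
    _ ≤ volume C + volume B := by
        rw [htrans, ← hsplit]
        exact add_le_add le_rfl (add_le_add hplus le_rfl)
    _ = ENNReal.ofReal (Real.pi * ε^2 * L + 4/3 * Real.pi * ε^3) := by
        rw [hC, cyl_vol hε.le, hB, ball3_vol hε.le,
          ← ENNReal.ofReal_mul (by positivity : (0:ℝ) ≤ L),
          ← ENNReal.ofReal_add (by positivity) (by positivity)]
        congr 1
        ring

lemma tube_vol_le {ε T : ℝ} (hε : 0 < ε) (hT : 0 ≤ T) (u : E3) :
    volume {z : E3 | ∃ s ∈ Set.Icc (0:ℝ) T, ‖z + s • u‖ ≤ ε}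
      ≤ ENNReal.ofReal (Real.pi * ε^2 * (T * ‖u‖) + 4/3 * Real.pi * ε^3) := by
  set c : ℝ := ‖u‖ with hc
  have hc0 : 0 ≤ c := norm_nonneg u
  have ha : ‖(c • e0 : E3)‖ = ‖u‖ := by
    rw [norm_smul, Real.norm_eq_abs, abs_of_nonneg hc0]
    simp [e0, EuclideanSpace.norm_single]
    exact hc
  set R : E3 ≃ₗᵢ[ℝ] E3 := Submodule.reflection (ℝ ∙ ((c • e0 : E3) - u))ᗮ with hRdef
  have hR : R (c • e0) = u := Submodule.reflection_sub ha
  have hSeq : {z : E3 | ∃ s ∈ Set.Icc (0:ℝ) T, ‖z + s • u‖ ≤ ε}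
      = ⇑R.symm ⁻¹' {z : E3 | ∃ t ∈ Set.Icc (0:ℝ) (T * c), ‖z + t • e0‖ ≤ ε} := by
    ext z
    simp only [Set.mem_preimage, Set.mem_setOf_eq]
    constructor
    · rintro ⟨s, ⟨hs0, hsT⟩, h⟩
      refine ⟨s * c, ⟨mul_nonneg hs0 hc0, mul_le_mul_of_nonneg_right hsT hc0⟩, ?_⟩
      have hkey : R.symm z + (s * c) • e0 = R.symm (z + s • u) := by
        rw [← smul_smul, map_add, LinearIsometryEquiv.map_smul]
        congr 2
        rw [← hR, LinearIsometryEquiv.symm_apply_apply]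
      rw [hkey, LinearIsometryEquiv.norm_map]
      exact h
    · rintro ⟨t, ⟨ht0, htc⟩, h⟩
      rcases eq_or_lt_of_le hc0 with hczero | hcpos
      · have ht : t = 0 := le_antisymm
          (by rw [← hczero] at htc; linarith [mul_nonneg hT (le_refl (0:ℝ))]) ht0
        refine ⟨0, ⟨le_refl _, hT⟩, ?_⟩
        have hu0 : u = 0 := by rw [hc] at hczero; exact norm_eq_zero.mp hczero.symm
        have h' := h
        rw [ht, zero_smul, add_zero] at h'
        rw [hu0, smul_zero, add_zero]
        calc ‖z‖ = ‖R.symm z‖ := (LinearIsometryEquiv.norm_map _ _).symm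
          _ ≤ ε := h'
      · refine ⟨t / c, ⟨div_nonneg ht0 hc0, (div_le_iff₀ hcpos).mpr (by linarith)⟩, ?_⟩
        have hkey : z + (t / c) • u = R (R.symm z + t • e0) := by
          have h1 : (t:ℝ) • e0 = (t / c) • ((c:ℝ) • e0) := by
            rw [smul_smul, div_mul_cancel₀ _ (ne_of_gt hcpos)]
          rw [h1, map_add, LinearIsometryEquiv.apply_symm_apply,
            LinearIsometryEquiv.map_smul, hR]
        rw [hkey, LinearIsometryEquiv.norm_map]
        exact h
  rw [hSeq, (R.symm.measurePreserving).measure_preimage_emb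
    R.symm.toHomeomorph.measurableEmbedding]
  exact capsule_vol_le hε (by positivity)

lemma tube_w_le {ε T : ℝ} (hε : 0 < ε) (hT : 0 ≤ T) (x v w : E3) :
    volume {y : E3 | ∃ s ∈ Set.Icc (0:ℝ) T, ‖y + s • w - x - s • v‖ ≤ ε}
      ≤ ENNReal.ofReal (Real.pi * ε^2 * (T * ‖w - v‖) + 4/3 * Real.pi * ε^3) := by
  have hset : {y : E3 | ∃ s ∈ Set.Icc (0:ℝ) T, ‖y + s • w - x - s • v‖ ≤ ε}
      = (fun y : E3 => y + (-x)) ⁻¹'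
        {z : E3 | ∃ s ∈ Set.Icc (0:ℝ) T, ‖z + s • (w - v)‖ ≤ ε} := by
    ext y
    simp only [Set.mem_preimage, Set.mem_setOf_eq]
    have harg : ∀ s : ℝ, y + s • w - x - s • v = (y + -x) + s • (w - v) := by
      intro s
      rw [smul_sub]
      abel
    constructor
    · rintro ⟨s, hs, h⟩; exact ⟨s, hs, by rw [← harg s]; exact h⟩
    · rintro ⟨s, hs, h⟩; exact ⟨s, hs, by rw [harg s]; exact h⟩
  rw [hset, measure_preimage_add_right volume (-x) _]
  exact tube_vol_le hε hT (w - v)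

lemma integrable_gauss {b : ℝ} (hb : 0 < b) :
    Integrable (fun v : E3 => Real.exp (-b * ‖v‖^2)) := by
  have h := (GaussianFourier.integrable_cexp_neg_mul_sq_norm_add (V := E3) (b := (b:ℂ))
    (by simpa using hb) 0 0).norm
  refine h.congr (Filter.Eventually.of_forall fun v => ?_)
  simp [Complex.norm_exp]
  left; norm_cast

lemma Mβ_nonneg (β : ℝ) (hβ : 0 < β) (v : E3) : 0 ≤ Mβ β v := by
  unfold Mβ
  positivity

lemma continuous_Mβ (β : ℝ) : Continuous (Mβ β) := by
  unfold Mβ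
  fun_prop

lemma integrable_Mβ (β : ℝ) (hβ : 0 < β) : Integrable (Mβ β) := by
  unfold Mβ
  exact (integrable_gauss (by positivity : (0:ℝ) < β/2)).const_mul _

lemma integral_Mβ (β : ℝ) (hβ : 0 < β) : ∫ w : E3, Mβ β w = 1 := by
  unfold Mβ
  rw [MeasureTheory.integral_const_mul]
  have hb : (0:ℝ) < β / 2 := by positivity
  have h := GaussianFourier.integral_rexp_neg_mul_sq_norm (V := E3) hb
  simp only [neg_mul] at h ⊢
  rw [h]
  have hfr : (Module.finrank ℝ E3 : ℝ) = 3 := by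
    simp [finrank_euclideanSpace]
  rw [hfr]
  rw [← Real.mul_rpow (by positivity) (by positivity)]
  have h1 : β / (2 * Real.pi) * (Real.pi / (β / 2)) = 1 := by
    field_simp
  rw [h1, Real.one_rpow]

lemma integrable_Mβ_mul_norm (β : ℝ) (hβ : 0 < β) (v : E3) :
    Integrable (fun w : E3 => Mβ β w * ‖w - v‖) := by
  set C : ℝ := (β / (2 * Real.pi)) ^ ((3 : ℝ) / 2) with hCdef
  have hC : 0 ≤ C := by positivity
  set K : ℝ := C * (1 + 4 / β + ‖v‖) with hKdef
  have hg : Integrable (fun w : E3 => K * Real.exp (-(β/4) * ‖w‖^2)) :=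
    (integrable_gauss (by positivity)).const_mul K
  refine hg.mono ?_ (Filter.Eventually.of_forall fun w => ?_)
  · exact ((continuous_Mβ β).mul (continuous_norm.comp
      (continuous_id.sub continuous_const))).aestronglyMeasurable
  · set t : ℝ := ‖w‖ with htdef
    have ht : 0 ≤ t := norm_nonneg _
    set E : ℝ := Real.exp (-(β/4) * t^2) with hEdef
    have hE0 : 0 < E := Real.exp_pos _
    have hE1 : E ≤ 1 := Real.exp_le_one_iff.mpr (by nlinarith)
    have h2 : E * t^2 ≤ 4 / β := by
      have hx : (β/4) * t^2 ≤ Real.exp ((β/4) * t^2) :=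
        le_trans (by linarith [Real.add_one_le_exp ((β/4) * t^2)]) le_rfl
      have hEinv : E = (Real.exp ((β/4) * t^2))⁻¹ := by
        rw [hEdef, ← Real.exp_neg]; ring_nf
      set A : ℝ := Real.exp ((β/4) * t^2) with hA
      have hA0 : 0 < A := Real.exp_pos _
      have ht2 : t^2 ≤ 4 / β * A := by
        rw [div_mul_eq_mul_div, le_div_iff₀ hβ]
        nlinarith
      calc E * t^2 ≤ E * (4 / β * A) := by
            have := mul_le_mul_of_nonneg_left ht2 hE0.le
            linarith
        _ = 4 / β := by rw [hEinv]; field_simp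
    have hEt : E * t ≤ 1 + 4 / β := by
      nlinarith [mul_nonneg hE0.le (by nlinarith [sq_nonneg (t - 1)] : (0:ℝ) ≤ 1 + t^2 - t)]
    have hn : ‖w - v‖ ≤ t + ‖v‖ := norm_sub_le _ _
    have hn0 : (0:ℝ) ≤ ‖w - v‖ := norm_nonneg _
    have hv0 : (0:ℝ) ≤ ‖v‖ := norm_nonneg _
    have hsplit : Real.exp (-(β/2) * t^2) = E * E := by
      rw [hEdef, ← Real.exp_add]; ring_nf
    have hMw : Mβ β w = C * (E * E) := by rw [Mβ, ← htdef, hsplit]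
    have hfnn : 0 ≤ Mβ β w * ‖w - v‖ := mul_nonneg (by rw [hMw]; positivity) hn0
    have hgnn : 0 ≤ K * Real.exp (-(β/4) * ‖w‖^2) := by
      rw [hKdef]; positivity
    rw [Real.norm_eq_abs, Real.norm_eq_abs, abs_of_nonneg hfnn, abs_of_nonneg hgnn, hMw]
    have hcore : E * E * ‖w - v‖ ≤ (1 + 4 / β + ‖v‖) * E := by
      nlinarith [mul_le_mul_of_nonneg_right hEt hE0.le,
        mul_le_mul_of_nonneg_right hn (mul_nonneg hE0.le hE0.le),
        mul_le_mul_of_nonneg_right hE1 (mul_nonneg hE0.le hv0)]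
    calc C * (E * E) * ‖w - v‖ = C * (E * E * ‖w - v‖) := by ring
      _ ≤ C * ((1 + 4 / β + ‖v‖) * E) := mul_le_mul_of_nonneg_left hcore hC
      _ = C * (1 + 4 / β + ‖v‖) * E := by ring

end TubeAux

open TubeAux

/-- Averaging the volume of the collision tube over the Maxwellian obstacle velocity:
`∫ M_β(w) vol({y : ∃ s ∈ [0,T], ‖y + s w − x − s v‖ ≤ ε}) dw ≤ ε² λ(v) T + (4/3) π ε³`. -/
theorem averaged_tube_volume_bound (β : ℝ) (hβ : 0 < β) (x v : E3) (ε T : ℝ)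
    (hε : 0 < ε) (hT : 0 ≤ T) :
    (∫⁻ w : E3, ENNReal.ofReal (Mβ β w) *
        volume {y : E3 | ∃ s ∈ Set.Icc (0 : ℝ) T, ‖y + s • w - x - s • v‖ ≤ ε}) ≤
      ENNReal.ofReal (ε ^ 2 * lam β v * T + (4 / 3) * Real.pi * ε ^ 3) := by
  have hfint : Integrable (fun w : E3 =>
      Mβ β w * (Real.pi * ε^2 * (T * ‖w - v‖) + 4/3 * Real.pi * ε^3)) := by
    have h1 : Integrable (fun w : E3 =>
        (Real.pi * ε^2 * T) * (Mβ β w * ‖w - v‖)) :=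
      (integrable_Mβ_mul_norm β hβ v).const_mul _
    have h2 : Integrable (fun w : E3 => (4/3 * Real.pi * ε^3) * Mβ β w) :=
      (integrable_Mβ β hβ).const_mul _
    refine (h1.add h2).congr (Filter.Eventually.of_forall fun w => ?_)
    simp only [Pi.add_apply]
    ring
  calc (∫⁻ w : E3, ENNReal.ofReal (Mβ β w) *
        volume {y : E3 | ∃ s ∈ Set.Icc (0 : ℝ) T, ‖y + s • w - x - s • v‖ ≤ ε})
      ≤ ∫⁻ w : E3, ENNReal.ofReal (Mβ β w) *
          ENNReal.ofReal (Real.pi * ε^2 * (T * ‖w - v‖) + 4/3 * Real.pi * ε^3) := by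
        refine lintegral_mono fun w => ?_
        exact mul_le_mul_right (tube_w_le hε hT x v w) _
    _ = ∫⁻ w : E3, ENNReal.ofReal
          (Mβ β w * (Real.pi * ε^2 * (T * ‖w - v‖) + 4/3 * Real.pi * ε^3)) := by
        congr 1
        ext w
        rw [← ENNReal.ofReal_mul (Mβ_nonneg β hβ w)]
    _ = ENNReal.ofReal (∫ w : E3,
          Mβ β w * (Real.pi * ε^2 * (T * ‖w - v‖) + 4/3 * Real.pi * ε^3)) := by
        rw [MeasureTheory.ofReal_integral_eq_lintegral_ofReal hfint]
        exact Filter.Eventually.of_forall fun w =>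
          mul_nonneg (Mβ_nonneg β hβ w) (by positivity)
    _ = ENNReal.ofReal (ε ^ 2 * lam β v * T + (4 / 3) * Real.pi * ε ^ 3) := by
        congr 1
        have hsplit : ∫ w : E3,
            Mβ β w * (Real.pi * ε^2 * (T * ‖w - v‖) + 4/3 * Real.pi * ε^3)
            = (Real.pi * ε^2 * T) * (∫ w : E3, Mβ β w * ‖w - v‖)
              + (4/3 * Real.pi * ε^3) * (∫ w : E3, Mβ β w) := by
          rw [← MeasureTheory.integral_const_mul, ← MeasureTheory.integral_const_mul,
            ← MeasureTheory.integral_add ((integrable_Mβ_mul_norm β hβ v).const_mul _)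
              ((integrable_Mβ β hβ).const_mul _)]
          congr 1
          ext w
          ring
        rw [hsplit, integral_Mβ β hβ]
        have hrev : (∫ w : E3, Mβ β w * ‖w - v‖) = ∫ w : E3, Mβ β w * ‖v - w‖ := by
          congr 1
          ext w
          rw [norm_sub_rev]
        rw [hrev, lam]
        ring
end
end

section
/- For all a, b, u ∈ ℝ³ and every r > 0: ∫_{B_r(u)} 1/(‖v−a‖·‖v−b‖) dv ≤ 4π·r, where B_r(u) = {v ∈ ℝ³ : ‖v−u‖ ≤ r} and the integral is with respect to Lebesgue measure (the integrand, defined almost everywhere, is integrable on B_r(u)). -/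
open MeasureTheory Set Metric
open MeasureTheory

noncomputable section

lemma vol_ball3 (x : E3) (s : ℝ) :
    volume (Metric.ball x s) = ENNReal.ofReal (4/3 * Real.pi * s ^ 3) := by
  rw [EuclideanSpace.volume_ball]
  have hcard : Fintype.card (Fin 3) = 3 := by simp
  rw [hcard]
  have hG : Real.Gamma ((3:ℕ) / 2 + 1) = 3 / 4 * Real.sqrt Real.pi := by
    have h1 : ((3:ℕ):ℝ) / 2 + 1 = (1/2 : ℝ) + 1 + 1 := by norm_num
    rw [h1, Real.Gamma_add_one (by norm_num), Real.Gamma_add_one (by norm_num),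
      Real.Gamma_one_half_eq]
    ring
  rw [hG]
  rcases le_or_gt 0 s with hs | hs
  · rw [← ENNReal.ofReal_pow hs, ← ENNReal.ofReal_mul (by positivity)]
    congr 1
    have hπ : 0 < Real.sqrt Real.pi := Real.sqrt_pos.2 Real.pi_pos
    have : Real.sqrt Real.pi ^ 3 = Real.pi * Real.sqrt Real.pi := by
      rw [pow_succ, Real.sq_sqrt Real.pi_pos.le]
    rw [this]
    field_simp
  · have hcube : s ^ 3 ≤ 0 := Odd.pow_nonpos (⟨1, by norm_num⟩ : Odd 3) hs.le
    have h3 : 4/3 * Real.pi * s ^ 3 ≤ 0 :=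
      mul_nonpos_of_nonneg_of_nonpos (by positivity) hcube
    rw [ENNReal.ofReal_of_nonpos h3, ENNReal.ofReal_of_nonpos hs.le]
    simp

lemma vol_closedBall3 (x : E3) (s : ℝ) :
    volume (Metric.closedBall x s) = ENNReal.ofReal (4/3 * Real.pi * s ^ 3) := by
  rw [MeasureTheory.Measure.addHaar_closedBall_eq_addHaar_ball, vol_ball3]

lemma lintegral_inv_sq_closedBall_zero (r : ℝ) (hr : 0 < r) :
    ∫⁻ v in Metric.closedBall (0:E3) r, ENNReal.ofReal ((‖v‖^2)⁻¹)
      ≤ ENNReal.ofReal (4 * Real.pi * r) := by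
  have hmeas : Measurable (fun v : E3 => (‖v‖^2)⁻¹) :=
    ((measurable_norm).pow_const 2).inv
  rw [lintegral_eq_lintegral_meas_lt _
    (Filter.Eventually.of_forall fun v => inv_nonneg.2 (sq_nonneg _)) hmeas.aemeasurable]
  set μ := volume.restrict (Metric.closedBall (0:E3) r) with hμ
  have hA : (0:ℝ) < r⁻¹ ^ 2 := by positivity
  rw [← Set.Ioc_union_Ioi_eq_Ioi hA.le,
    lintegral_union measurableSet_Ioi Set.Ioc_disjoint_Ioi_same]
  have part1 : ∫⁻ t in Set.Ioc 0 (r⁻¹^2), μ {v : E3 | t < (‖v‖^2)⁻¹}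
      ≤ ENNReal.ofReal (4/3 * Real.pi * r) := by
    calc ∫⁻ t in Set.Ioc 0 (r⁻¹^2), μ {v : E3 | t < (‖v‖^2)⁻¹}
        ≤ ∫⁻ _ in Set.Ioc 0 (r⁻¹^2), volume (Metric.closedBall (0:E3) r) := by
          refine lintegral_mono fun t => ?_
          exact le_trans (measure_mono (Set.subset_univ _))
            (by rw [Measure.restrict_apply_univ])
      _ = volume (Metric.closedBall (0:E3) r) * volume (Set.Ioc (0:ℝ) (r⁻¹^2)) := by
          rw [setLIntegral_const]
      _ = ENNReal.ofReal (4/3 * Real.pi * r) := by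
          rw [vol_closedBall3, Real.volume_Ioc, ← ENNReal.ofReal_mul (by positivity)]
          congr 1
          field_simp
          ring
  have part2 : ∫⁻ t in Set.Ioi (r⁻¹^2), μ {v : E3 | t < (‖v‖^2)⁻¹}
      ≤ ENNReal.ofReal (8/3 * Real.pi * r) := by
    have step1 : ∫⁻ t in Set.Ioi (r⁻¹^2), μ {v : E3 | t < (‖v‖^2)⁻¹}
        ≤ ∫⁻ t in Set.Ioi (r⁻¹^2), ENNReal.ofReal (4/3 * Real.pi) *
            ENNReal.ofReal (t ^ (-(3/2) : ℝ)) := by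
      refine lintegral_mono_ae ?_
      filter_upwards [ae_restrict_mem measurableSet_Ioi] with t ht
      have ht0 : (0:ℝ) < t := lt_trans hA ht
      have hsub : {v : E3 | t < (‖v‖^2)⁻¹} ⊆ Metric.ball 0 ((Real.sqrt t)⁻¹) := by
        intro v hv
        simp only [Set.mem_setOf_eq] at hv
        have hv0 : (0:ℝ) < ‖v‖^2 := by
          by_contra h
          push_neg at h
          have : ‖v‖^2 = 0 := le_antisymm h (sq_nonneg _)
          rw [this, inv_zero] at hv
          exact absurd hv (not_lt.2 ht0.le)
        have h1 : ‖v‖^2 < t⁻¹ := by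
          have h2 : t * ‖v‖^2 < 1 := by
            have := mul_lt_mul_of_pos_right hv hv0
            rwa [inv_mul_cancel₀ hv0.ne'] at this
          calc ‖v‖^2 = t⁻¹ * (t * ‖v‖^2) := by field_simp
            _ < t⁻¹ * 1 := mul_lt_mul_of_pos_left h2 (inv_pos.2 ht0)
            _ = t⁻¹ := mul_one _
        have hsq : ((Real.sqrt t)⁻¹)^2 = t⁻¹ := by
          rw [inv_pow, Real.sq_sqrt ht0.le]
        rw [Metric.mem_ball, dist_zero_right]
        refine lt_of_pow_lt_pow_left₀ 2 (by positivity) ?_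
        rw [hsq]; exact h1
      calc μ {v : E3 | t < (‖v‖^2)⁻¹}
          ≤ volume {v : E3 | t < (‖v‖^2)⁻¹} := Measure.restrict_apply_le _ _
        _ ≤ volume (Metric.ball (0:E3) ((Real.sqrt t)⁻¹)) := measure_mono hsub
        _ = ENNReal.ofReal (4/3 * Real.pi * ((Real.sqrt t)⁻¹)^3) := vol_ball3 _ _
        _ = ENNReal.ofReal (4/3 * Real.pi) * ENNReal.ofReal (t ^ (-(3/2) : ℝ)) := by
            rw [← ENNReal.ofReal_mul (by positivity)]
            congr 1
            rw [Real.sqrt_eq_rpow, ← Real.rpow_neg_one (t ^ ((1:ℝ)/2)),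
              ← Real.rpow_mul ht0.le, ← Real.rpow_natCast (t ^ ((1:ℝ)/2 * -1)) 3,
              ← Real.rpow_mul ht0.le]
            norm_num
    have step2 : ∫⁻ t in Set.Ioi (r⁻¹^2), ENNReal.ofReal (4/3 * Real.pi) *
          ENNReal.ofReal (t ^ (-(3/2) : ℝ)) = ENNReal.ofReal (8/3 * Real.pi * r) := by
      rw [lintegral_const_mul' _ _ ENNReal.ofReal_ne_top]
      have hint : IntegrableOn (fun t : ℝ => t ^ (-(3/2) : ℝ)) (Set.Ioi (r⁻¹^2)) :=
        integrableOn_Ioi_rpow_of_lt (by norm_num) hA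
      rw [← ofReal_integral_eq_lintegral_ofReal hint ?_]
      · rw [integral_Ioi_rpow_of_lt (by norm_num) hA, ← ENNReal.ofReal_mul (by positivity)]
        congr 1
        have hval : (r⁻¹^2 : ℝ) ^ ((-(3/2) : ℝ) + 1) = r := by
          rw [← Real.rpow_neg_one r, ← Real.rpow_natCast (r ^ (-1:ℝ)) 2,
            ← Real.rpow_mul hr.le, ← Real.rpow_mul hr.le]
          norm_num
        rw [hval]
        ring
      · filter_upwards [ae_restrict_mem measurableSet_Ioi] with t ht
        exact Real.rpow_nonneg (le_of_lt (lt_trans hA ht)) _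
    exact step1.trans_eq step2
  calc _ ≤ ENNReal.ofReal (4/3 * Real.pi * r) + ENNReal.ofReal (8/3 * Real.pi * r) :=
        add_le_add part1 part2
    _ = ENNReal.ofReal (4 * Real.pi * r) := by
        rw [← ENNReal.ofReal_add (by positivity) (by positivity)]
        congr 1; ring

lemma lintegral_inv_sq_closedBall (d : E3) (r : ℝ) (hr : 0 < r) :
    ∫⁻ v in Metric.closedBall d r, ENNReal.ofReal ((‖v‖^2)⁻¹)
      ≤ ∫⁻ v in Metric.closedBall (0:E3) r, ENNReal.ofReal ((‖v‖^2)⁻¹) := by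
  have hAm : MeasurableSet (Metric.closedBall d r) := measurableSet_closedBall
  have hBm : MeasurableSet (Metric.closedBall (0:E3) r) := measurableSet_closedBall
  have hABfin : volume (Metric.closedBall d r ∩ Metric.closedBall (0:E3) r) ≠ ⊤ :=
    (lt_of_le_of_lt (measure_mono Set.inter_subset_left) measure_closedBall_lt_top).ne
  have hvol : volume (Metric.closedBall d r \ Metric.closedBall (0:E3) r)
      = volume (Metric.closedBall (0:E3) r \ Metric.closedBall d r) := by
    have h1 : volume (Metric.closedBall d r \ Metric.closedBall (0:E3) r)
        = volume (Metric.closedBall d r)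
          - volume (Metric.closedBall d r ∩ Metric.closedBall (0:E3) r) := by
      rw [← Set.diff_self_inter]
      exact measure_diff Set.inter_subset_left (hAm.inter hBm).nullMeasurableSet hABfin
    have h2 : volume (Metric.closedBall (0:E3) r \ Metric.closedBall d r)
        = volume (Metric.closedBall (0:E3) r)
          - volume (Metric.closedBall (0:E3) r ∩ Metric.closedBall d r) := by
      rw [← Set.diff_self_inter]
      exact measure_diff Set.inter_subset_left (hBm.inter hAm).nullMeasurableSet
        (by rw [Set.inter_comm]; exact hABfin)
    rw [h1, h2, Set.inter_comm, vol_closedBall3, vol_closedBall3]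
  have hsplitA := (lintegral_inter_add_diff (μ := volume)
    (fun v : E3 => ENNReal.ofReal ((‖v‖^2)⁻¹)) (Metric.closedBall d r) hBm).symm
  have hsplitB := (lintegral_inter_add_diff (μ := volume)
    (fun v : E3 => ENNReal.ofReal ((‖v‖^2)⁻¹)) (Metric.closedBall (0:E3) r) hAm).symm
  have h1 : ∫⁻ v in Metric.closedBall d r \ Metric.closedBall (0:E3) r,
      ENNReal.ofReal ((‖v‖^2)⁻¹)
      ≤ ENNReal.ofReal ((r^2)⁻¹)
        * volume (Metric.closedBall d r \ Metric.closedBall (0:E3) r) := by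
    rw [← setLIntegral_const]
    refine lintegral_mono_ae ?_
    filter_upwards [ae_restrict_mem (hAm.diff hBm)] with v hv
    have hvr : r < ‖v‖ := by
      have := hv.2
      rw [Metric.mem_closedBall, dist_zero_right, not_le] at this
      exact this
    refine ENNReal.ofReal_le_ofReal ?_
    exact inv_anti₀ (by positivity) (by nlinarith)
  have h2 : ENNReal.ofReal ((r^2)⁻¹)
        * volume (Metric.closedBall (0:E3) r \ Metric.closedBall d r)
      ≤ ∫⁻ v in Metric.closedBall (0:E3) r \ Metric.closedBall d r,
        ENNReal.ofReal ((‖v‖^2)⁻¹) := by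
    rw [← setLIntegral_const]
    refine lintegral_mono_ae ?_
    have h0 : ∀ᵐ v : E3 ∂(volume.restrict
        (Metric.closedBall (0:E3) r \ Metric.closedBall d r)), v ≠ 0 := by
      refine ae_restrict_of_ae ?_
      rw [ae_iff]
      simp only [ne_eq, not_not, Set.setOf_eq_eq_singleton]
      exact measure_singleton 0
    filter_upwards [ae_restrict_mem (hBm.diff hAm), h0] with v hv hv0
    have hvr : ‖v‖ ≤ r := by
      have := hv.1
      rwa [Metric.mem_closedBall, dist_zero_right] at this
    have hvpos : 0 < ‖v‖ := norm_pos_iff.2 hv0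
    refine ENNReal.ofReal_le_ofReal ?_
    exact inv_anti₀ (by positivity) (by nlinarith)
  calc ∫⁻ v in Metric.closedBall d r, ENNReal.ofReal ((‖v‖^2)⁻¹)
      = (∫⁻ v in Metric.closedBall d r ∩ Metric.closedBall (0:E3) r,
          ENNReal.ofReal ((‖v‖^2)⁻¹))
        + ∫⁻ v in Metric.closedBall d r \ Metric.closedBall (0:E3) r,
          ENNReal.ofReal ((‖v‖^2)⁻¹) := hsplitA
    _ ≤ (∫⁻ v in Metric.closedBall d r ∩ Metric.closedBall (0:E3) r,
          ENNReal.ofReal ((‖v‖^2)⁻¹))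
        + ENNReal.ofReal ((r^2)⁻¹)
          * volume (Metric.closedBall d r \ Metric.closedBall (0:E3) r) := by gcongr
    _ = (∫⁻ v in Metric.closedBall d r ∩ Metric.closedBall (0:E3) r,
          ENNReal.ofReal ((‖v‖^2)⁻¹))
        + ENNReal.ofReal ((r^2)⁻¹)
          * volume (Metric.closedBall (0:E3) r \ Metric.closedBall d r) := by rw [hvol]
    _ ≤ (∫⁻ v in Metric.closedBall d r ∩ Metric.closedBall (0:E3) r,
          ENNReal.ofReal ((‖v‖^2)⁻¹))
        + ∫⁻ v in Metric.closedBall (0:E3) r \ Metric.closedBall d r,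
          ENNReal.ofReal ((‖v‖^2)⁻¹) := by gcongr
    _ = ∫⁻ v in Metric.closedBall (0:E3) r, ENNReal.ofReal ((‖v‖^2)⁻¹) := by
        rw [hsplitB, Set.inter_comm]

lemma lintegral_translate (c u : E3) (r : ℝ) :
    ∫⁻ v in Metric.closedBall u r, ENNReal.ofReal ((‖v - c‖^2)⁻¹)
      = ∫⁻ v in Metric.closedBall (u - c) r, ENNReal.ofReal ((‖v‖^2)⁻¹) := by
  have h : volume = Measure.map (· + c) (volume : Measure E3) :=
    (map_add_right_eq_self volume c).symm
  have hmeas : Measurable (fun v : E3 => ENNReal.ofReal ((‖v - c‖^2)⁻¹)) :=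
    (((measurable_id.sub measurable_const).norm.pow_const 2).inv).ennreal_ofReal
  conv_lhs => rw [h]
  rw [setLIntegral_map measurableSet_closedBall hmeas (measurable_add_const c)]
  have hpre : (fun x : E3 => x + c) ⁻¹' Metric.closedBall u r
      = Metric.closedBall (u - c) r := by
    ext v
    simp only [Set.mem_preimage, Metric.mem_closedBall, dist_eq_norm]
    constructor <;> intro hh <;> [skip; skip] <;>
      · convert hh using 2
        abel
  rw [hpre]
  congr 1
  ext v
  rw [add_sub_cancel_right]

lemma main_bound (c u : E3) (r : ℝ) (hr : 0 < r) :
    ∫⁻ v in Metric.closedBall u r, ENNReal.ofReal ((‖v - c‖^2)⁻¹)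
      ≤ ENNReal.ofReal (4 * Real.pi * r) := by
  rw [lintegral_translate]
  exact (lintegral_inv_sq_closedBall _ r hr).trans (lintegral_inv_sq_closedBall_zero r hr)

lemma pointwise_amgm (x y : ℝ) (hx : 0 ≤ x) (hy : 0 ≤ y) :
    1 / (x * y) ≤ 2⁻¹ * ((x^2)⁻¹ + (y^2)⁻¹) := by
  rcases eq_or_lt_of_le hx with hx0 | hx0
  · rw [← hx0, zero_mul, div_zero]
    positivity
  rcases eq_or_lt_of_le hy with hy0 | hy0
  · rw [← hy0, mul_zero, div_zero]
    positivity
  have hkey : 2⁻¹ * ((x^2)⁻¹ + (y^2)⁻¹) - 1/(x*y) = (x - y)^2 / (2*x^2*y^2) := by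
    field_simp
    ring
  have hpos : (0:ℝ) ≤ (x - y)^2 / (2*x^2*y^2) :=
    div_nonneg (sq_nonneg _) (by positivity)
  linarith

/-- For all `a, b, u ∈ ℝ³` and `r > 0`, the function `v ↦ 1/(‖v−a‖‖v−b‖)` is integrable on
the closed ball `B_r(u)` and its integral there is at most `4π r`. -/
theorem ball_double_singular_integral (a b u : E3) (r : ℝ) (hr : 0 < r) :
    IntegrableOn (fun v : E3 => 1 / (‖v - a‖ * ‖v - b‖)) (Metric.closedBall u r) ∧
    (∫ v in Metric.closedBall u r, 1 / (‖v - a‖ * ‖v - b‖)) ≤ 4 * Real.pi * r := by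

  have hfm : Measurable (fun v : E3 => 1 / (‖v - a‖ * ‖v - b‖)) := by
    simp only [one_div]
    exact ((((measurable_id.sub measurable_const).norm).mul
      ((measurable_id.sub measurable_const).norm)).inv)
  have hnn : ∀ v : E3, 0 ≤ 1 / (‖v - a‖ * ‖v - b‖) := fun v => by positivity
  have hma : Measurable (fun v : E3 => ENNReal.ofReal ((‖v - a‖^2)⁻¹)) :=
    (((measurable_id.sub measurable_const).norm.pow_const 2).inv).ennreal_ofReal
  have hlint : ∫⁻ v in Metric.closedBall u r, ENNReal.ofReal (1 / (‖v - a‖ * ‖v - b‖))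
      ≤ ENNReal.ofReal (4 * Real.pi * r) := by
    calc ∫⁻ v in Metric.closedBall u r, ENNReal.ofReal (1 / (‖v - a‖ * ‖v - b‖))
        ≤ ∫⁻ v in Metric.closedBall u r, ENNReal.ofReal 2⁻¹ *
            (ENNReal.ofReal ((‖v - a‖^2)⁻¹) + ENNReal.ofReal ((‖v - b‖^2)⁻¹)) := by
          refine lintegral_mono fun v => ?_
          rw [← ENNReal.ofReal_add (by positivity) (by positivity),
            ← ENNReal.ofReal_mul (by norm_num)]
          exact ENNReal.ofReal_le_ofReal
            (pointwise_amgm _ _ (norm_nonneg _) (norm_nonneg _))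
      _ = ENNReal.ofReal 2⁻¹ * ((∫⁻ v in Metric.closedBall u r,
            ENNReal.ofReal ((‖v - a‖^2)⁻¹))
          + ∫⁻ v in Metric.closedBall u r, ENNReal.ofReal ((‖v - b‖^2)⁻¹)) := by
          rw [lintegral_const_mul' _ _ ENNReal.ofReal_ne_top, lintegral_add_left hma]
      _ ≤ ENNReal.ofReal 2⁻¹ *
            (ENNReal.ofReal (4 * Real.pi * r) + ENNReal.ofReal (4 * Real.pi * r)) := by
          gcongr
          · exact main_bound a u r hr
          · exact main_bound b u r hr
      _ = ENNReal.ofReal (4 * Real.pi * r) := by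
          rw [← ENNReal.ofReal_add (by positivity) (by positivity),
            ← ENNReal.ofReal_mul (by norm_num)]
          congr 1
          ring
  have hint : IntegrableOn (fun v : E3 => 1 / (‖v - a‖ * ‖v - b‖))
      (Metric.closedBall u r) := by
    refine ⟨hfm.aestronglyMeasurable, ?_⟩
    rw [hasFiniteIntegral_iff_norm]
    have heq : ∀ v : E3, ENNReal.ofReal ‖1 / (‖v - a‖ * ‖v - b‖)‖
        = ENNReal.ofReal (1 / (‖v - a‖ * ‖v - b‖)) := fun v => by
      rw [Real.norm_of_nonneg (hnn v)]
    simp_rw [heq]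
    exact lt_of_le_of_lt hlint ENNReal.ofReal_lt_top
  refine ⟨hint, ?_⟩
  rw [MeasureTheory.integral_eq_lintegral_of_nonneg_ae
    (Filter.Eventually.of_forall hnn) hfm.aestronglyMeasurable]
  exact ENNReal.toReal_le_of_le_ofReal (by positivity) hlint
end
end

section
/- There exists a universal constant C > 0 such that for every r > 0, every x ∈ ℝ³ \ {0}, and all a, b ∈ ℝ³: ∫_{Cyl_r(x)} 1/(‖v−a‖·‖v−b‖) dv ≤ C·r, where Cyl_r(x) = {v ∈ ℝ³ : dist(v, ℝ·x) ≤ r} is the infinite cylinder of radius r around the line ℝ·x = {t·x : t ∈ ℝ}, and the integral is with respect to Lebesgue measure (in particular the integrand is integrable on Cyl_r(x)). -/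
open MeasureTheory

noncomputable section

/-- The infinite cylinder of radius `r` around the line `ℝ·x`. -/
def Cyl (r : ℝ) (x : E3) : Set E3 :=
  {v : E3 | Metric.infDist v {z : E3 | ∃ t : ℝ, z = t • x} ≤ r}

open Metric ENNReal

abbrev E2 := EuclideanSpace ℝ (Fin 2)

def Vb : ℝ≥0∞ := volume (Metric.ball (0:E2) 1)

lemma hVb_ne_top : Vb ≠ ⊤ := measure_ball_lt_top.ne

lemma vol_cb (s : ℝ) (hs : 0 ≤ s) : volume (closedBall (0:E2) s) = ENNReal.ofReal (s^2) * Vb := by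
  have := Measure.addHaar_closedBall (μ := (volume : Measure E2)) 0 hs
  simpa [Vb, finrank_euclideanSpace_fin] using this

lemma lint_inv_norm_ball (r : ℝ) (hr : 0 < r) :
    ∫⁻ y in closedBall (0:E2) r, ENNReal.ofReal ‖y‖⁻¹ ≤ ENNReal.ofReal (4*r) * Vb := by
  set A : ℕ → Set E2 := fun n => closedBall 0 (r*(1/2)^n) \ closedBall 0 (r*(1/2)^(n+1)) with hA
  have hcover : closedBall (0:E2) r \ {0} ⊆ ⋃ n, A n := by
    rintro y ⟨hy, hy0⟩
    have hy0' : 0 < ‖y‖ := norm_pos_iff.2 (by simpa using hy0)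
    have hyr : ‖y‖ ≤ r := by simpa [mem_closedBall, dist_zero_right] using hy
    have hex : ∃ n : ℕ, r * (1/2)^(n+1) < ‖y‖ := by
      obtain ⟨n, hn⟩ := exists_pow_lt_of_lt_one (div_pos hy0' hr) (by norm_num : (1:ℝ)/2 < 1)
      refine ⟨n, ?_⟩
      have h1 : ((1:ℝ)/2)^(n+1) ≤ (1/2)^n := by
        apply pow_le_pow_of_le_one (by norm_num) (by norm_num); omega
      have := (lt_div_iff₀ hr).1 hn
      nlinarith [pow_pos (by norm_num : (0:ℝ) < 1/2) n]
    have hn1 : r*(1/2)^(Nat.find hex + 1) < ‖y‖ := Nat.find_spec hex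
    have hn2 : ‖y‖ ≤ r*(1/2)^(Nat.find hex) := by
      rcases Nat.eq_zero_or_pos (Nat.find hex) with h0 | hpos
      · rw [h0]; simpa using hyr
      · obtain ⟨m, hm⟩ := Nat.exists_eq_succ_of_ne_zero hpos.ne'
        have := Nat.find_min hex (m := m) (by omega)
        rw [hm]; exact not_lt.1 this
    refine Set.mem_iUnion.2 ⟨Nat.find hex, ?_, ?_⟩
    · simpa [mem_closedBall, dist_zero_right] using hn2
    · simp only [mem_closedBall, dist_zero_right, Set.mem_setOf_eq]
      exact fun h => absurd h (not_le.2 hn1)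
  have h0 : volume (closedBall (0:E2) r ∩ {(0:E2)}) = 0 :=
    le_antisymm (le_trans (measure_mono Set.inter_subset_right) (by simp)) zero_le
  calc ∫⁻ y in closedBall (0:E2) r, ENNReal.ofReal ‖y‖⁻¹
      = ∫⁻ y in closedBall (0:E2) r \ {0}, ENNReal.ofReal ‖y‖⁻¹ :=
        setLIntegral_congr ((diff_ae_eq_self (t := {(0:E2)})).2 h0).symm
    _ ≤ ∫⁻ y in ⋃ n, A n, ENNReal.ofReal ‖y‖⁻¹ := lintegral_mono_set hcover
    _ ≤ ∑' n, ∫⁻ y in A n, ENNReal.ofReal ‖y‖⁻¹ := lintegral_iUnion_le _ _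
    _ ≤ ∑' n, ENNReal.ofReal (2*r*(1/2)^n) * Vb := by
        refine ENNReal.tsum_le_tsum fun n => ?_
        have hpos : (0:ℝ) < r * (1/2)^(n+1) := by positivity
        calc ∫⁻ y in A n, ENNReal.ofReal ‖y‖⁻¹
            ≤ ∫⁻ _ in A n, ENNReal.ofReal ((r*(1/2)^(n+1))⁻¹) := by
              refine setLIntegral_mono measurable_const fun y hy => ?_
              obtain ⟨-, hy2⟩ := hy
              have hge : r*(1/2)^(n+1) ≤ ‖y‖ := by
                by_contra h
                exact hy2 (by simp only [mem_closedBall, dist_zero_right]; linarith)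
              exact ENNReal.ofReal_le_ofReal (inv_anti₀ hpos hge)
          _ = ENNReal.ofReal ((r*(1/2)^(n+1))⁻¹) * volume (A n) := setLIntegral_const _ _
          _ ≤ ENNReal.ofReal ((r*(1/2)^(n+1))⁻¹) * (ENNReal.ofReal ((r*(1/2)^n)^2) * Vb) := by
              gcongr
              · rw [← vol_cb _ (by positivity)]
                exact measure_mono Set.diff_subset
          _ = ENNReal.ofReal (2*r*(1/2)^n) * Vb := by
              rw [← mul_assoc, ← ENNReal.ofReal_mul (by positivity)]
              congr 2
              have hq : (0:ℝ) < (1/2:ℝ)^n := by positivity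
              field_simp [pow_succ]
              ring
    _ = ENNReal.ofReal (4*r) * Vb := by
        rw [ENNReal.tsum_mul_right]
        congr 1
        have : ∀ n : ℕ, ENNReal.ofReal (2*r*(1/2)^n)
            = ENNReal.ofReal (2*r) * (ENNReal.ofReal (1/2))^n := by
          intro n
          rw [ENNReal.ofReal_mul (by positivity), ENNReal.ofReal_pow (by norm_num)]
        simp_rw [this]
        rw [ENNReal.tsum_mul_left, ENNReal.tsum_geometric]
        have h12 : (1:ℝ≥0∞) - ENNReal.ofReal (1/2) = ENNReal.ofReal (1/2) := by
          rw [← ENNReal.ofReal_one, ← ENNReal.ofReal_sub _ (by norm_num)]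
          norm_num
        rw [h12, ← ENNReal.ofReal_inv_of_pos (by norm_num), ← ENNReal.ofReal_mul (by positivity)]
        norm_num
        ring_nf
        rw [ENNReal.ofReal_mul' (by norm_num), ENNReal.ofReal_ofNat]

lemma lint_inv_norm_ball' (r : ℝ) (hr : 0 < r) (β : E2) :
    ∫⁻ y in closedBall (0:E2) r, ENNReal.ofReal ‖y - β‖⁻¹ ≤ ENNReal.ofReal (12*r) * Vb := by
  rcases le_or_gt ‖β‖ (2*r) with hβ | hβ
  · have hsub : closedBall (0:E2) r ⊆ closedBall β (3*r) := by
      intro y hy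
      simp only [mem_closedBall, dist_zero_right] at hy
      simp only [mem_closedBall, dist_eq_norm]
      calc ‖y - β‖ ≤ ‖y‖ + ‖β‖ := norm_sub_le _ _
        _ ≤ 3*r := by linarith
    calc ∫⁻ y in closedBall (0:E2) r, ENNReal.ofReal ‖y - β‖⁻¹
        ≤ ∫⁻ y in closedBall β (3*r), ENNReal.ofReal ‖y - β‖⁻¹ := lintegral_mono_set hsub
      _ = ∫⁻ y in closedBall (0:E2) (3*r), ENNReal.ofReal ‖y‖⁻¹ := by
          have hmp : MeasurePreserving (fun y : E2 => y + β) volume volume :=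
            measurePreserving_add_right volume β
          have hemb : MeasurableEmbedding (fun y : E2 => y + β) :=
            (MeasurableEquiv.addRight β).measurableEmbedding
          have hpre : (fun y : E2 => y + β) ⁻¹' closedBall β (3*r) = closedBall 0 (3*r) := by
            ext y; simp [mem_closedBall, dist_eq_norm]
          have := hmp.setLIntegral_comp_preimage_emb hemb
            (fun w => ENNReal.ofReal ‖w - β‖⁻¹) (closedBall β (3*r))
          rw [hpre] at this
          rw [← this]
          simp
      _ ≤ ENNReal.ofReal (4*(3*r)) * Vb := lint_inv_norm_ball _ (by linarith)
      _ = ENNReal.ofReal (12*r) * Vb := by ring_nf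
  · calc ∫⁻ y in closedBall (0:E2) r, ENNReal.ofReal ‖y - β‖⁻¹
        ≤ ∫⁻ _ in closedBall (0:E2) r, ENNReal.ofReal r⁻¹ := by
          refine setLIntegral_mono measurable_const fun y hy => ?_
          simp only [mem_closedBall, dist_zero_right] at hy
          refine ENNReal.ofReal_le_ofReal (inv_anti₀ hr ?_)
          calc r ≤ ‖β‖ - ‖y‖ := by linarith
            _ ≤ ‖y - β‖ := by
              have := norm_sub_norm_le β y
              have h2 : ‖y - β‖ = ‖β - y‖ := norm_sub_rev _ _
              linarith [norm_sub_norm_le β y]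
      _ = ENNReal.ofReal r⁻¹ * volume (closedBall (0:E2) r) := setLIntegral_const _ _
      _ = ENNReal.ofReal r⁻¹ * (ENNReal.ofReal (r^2) * Vb) := by rw [vol_cb _ hr.le]
      _ ≤ ENNReal.ofReal (12*r) * Vb := by
          rw [← mul_assoc, ← ENNReal.ofReal_mul (by positivity)]
          refine mul_le_mul_left (ENNReal.ofReal_le_ofReal ?_) Vb
          have : r⁻¹ * r^2 = r := by field_simp
          rw [this]; linarith

lemma lint_one_dim (c : ℝ) (hc : 0 < c) (α : ℝ) :
    ∫⁻ t : ℝ, ENNReal.ofReal (((t - α)^2 + c^2)⁻¹) = ENNReal.ofReal (Real.pi / c) := by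
  have hfun : ∀ t : ℝ, (t^2 + c^2)⁻¹ = c⁻¹^2 * (1 + (c⁻¹*t)^2)⁻¹ := by
    intro t
    rw [inv_pow, ← mul_inv]
    congr 1
    field_simp
    ring
  have hint0 : Integrable (fun u : ℝ => (1 + u^2)⁻¹) := integrable_inv_one_add_sq
  have hint1 : Integrable (fun t : ℝ => (1 + (c⁻¹*t)^2)⁻¹) :=
    hint0.comp_mul_left' (inv_ne_zero hc.ne')
  have hint2 : Integrable (fun t : ℝ => (t^2 + c^2)⁻¹) := by
    simp_rw [hfun]; exact hint1.const_mul _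
  have hint3 : Integrable (fun t : ℝ => ((t - α)^2 + c^2)⁻¹) := hint2.comp_sub_right α
  have hval : ∫ t : ℝ, ((t - α)^2 + c^2)⁻¹ = Real.pi / c := by
    rw [integral_sub_right_eq_self (fun t : ℝ => (t^2 + c^2)⁻¹) α]
    simp_rw [hfun]
    rw [MeasureTheory.integral_const_mul]
    rw [MeasureTheory.Measure.integral_comp_mul_left (fun u : ℝ => (1 + u^2)⁻¹) c⁻¹, integral_univ_inv_one_add_sq]
    rw [inv_inv, abs_of_pos hc]
    rw [smul_eq_mul]
    field_simp
  rw [← MeasureTheory.ofReal_integral_eq_lintegral_ofReal hint3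
    (ae_of_all _ fun t => by positivity), hval]

def Ψ : E3 ≃ᵐ ℝ × E2 :=
  ((MeasurableEquiv.toLp 2 (Fin 3 → ℝ)).symm).trans
    ((MeasurableEquiv.piFinSuccAbove (fun _ : Fin 3 => ℝ) 0).trans
      ((MeasurableEquiv.refl ℝ).prodCongr ((MeasurableEquiv.toLp 2 (Fin 2 → ℝ)).symm).symm))


lemma hΨmp : MeasurePreserving Ψ volume volume := by
  have hp1 := EuclideanSpace.volume_preserving_symm_measurableEquiv_toLp (Fin 3)
  have hp2 := volume_preserving_piFinSuccAbove (fun _ : Fin 3 => ℝ) 0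
  have hp3 : MeasurePreserving
      (Prod.map (fun t : ℝ => t) (⇑((MeasurableEquiv.toLp 2 (Fin 2 → ℝ)).symm).symm))
      volume volume :=
    (MeasurePreserving.id volume).prod
      (EuclideanSpace.volume_preserving_symm_measurableEquiv_toLp (Fin 2)).symm
  exact hp3.comp (hp2.comp hp1)

lemma Ψ_fst (v : E3) : (Ψ v).1 = v 0 := rfl
lemma Ψ_snd (v : E3) (j : Fin 2) : (Ψ v).2 j = v (j.succ) := by
  rw [show (Ψ v).2 j = v (Fin.succAbove 0 j) from rfl, Fin.zero_succAbove]

lemma norm3_eq (z : E3) : ‖z‖^2 = (z 0)^2 + ((z 1)^2 + (z 2)^2) := by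
  rw [EuclideanSpace.norm_eq, Real.sq_sqrt (by positivity)]
  simp [Fin.sum_univ_three, sq_abs]
  ring

lemma norm2_eq (y : E2) : ‖y‖^2 = (y 0)^2 + (y 1)^2 := by
  rw [EuclideanSpace.norm_eq, Real.sq_sqrt (by positivity)]
  simp [Fin.sum_univ_two, sq_abs]

lemma norm_decomp (v a : E3) :
    ‖v - a‖^2 = ((Ψ v).1 - (Ψ a).1)^2 + ‖(Ψ v).2 - (Ψ a).2‖^2 := by
  rw [norm3_eq, norm2_eq]
  simp only [PiLp.sub_apply, Ψ_fst, Ψ_snd]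
  have e1 : ((0:Fin 2)).succ = (1 : Fin 3) := rfl
  have e2 : ((1:Fin 2)).succ = (2 : Fin 3) := rfl
  rw [e1, e2]

def e0 : E3 := EuclideanSpace.single (0 : Fin 3) (1:ℝ)

lemma infDist_line (v : E3) :
    Metric.infDist v {z : E3 | ∃ t : ℝ, z = t • e0} = ‖(Ψ v).2‖ := by
  have hnorm : ∀ t : ℝ, ‖v - t • e0‖^2 = (v 0 - t)^2 + ‖(Ψ v).2‖^2 := by
    intro t
    rw [norm3_eq, norm2_eq]
    simp only [PiLp.sub_apply, PiLp.smul_apply, e0, EuclideanSpace.single_apply, Ψ_snd,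
      smul_eq_mul]
    have e1 : ((0:Fin 2)).succ = (1 : Fin 3) := rfl
    have e2 : ((1:Fin 2)).succ = (2 : Fin 3) := rfl
    rw [e1, e2]
    rw [if_pos trivial, if_neg (by simp : ¬((1:Fin 3) = 0)), if_neg (by simp : ¬((2:Fin 3) = 0))]
    norm_num
  refine le_antisymm ?_ ?_
  · have hmem : (v 0) • e0 ∈ {z : E3 | ∃ t : ℝ, z = t • e0} := ⟨v 0, rfl⟩
    refine le_trans (Metric.infDist_le_dist_of_mem hmem) ?_
    rw [dist_eq_norm]
    have h := hnorm (v 0)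
    simp only [sub_self] at h
    nlinarith [norm_nonneg (v - (v 0) • e0), norm_nonneg (Ψ v).2]
  · by_contra h
    push_neg at h
    have hne : Set.Nonempty {z : E3 | ∃ t : ℝ, z = t • e0} := ⟨0, 0, by simp⟩
    obtain ⟨z, ⟨t, rfl⟩, hz⟩ := (Metric.infDist_lt_iff hne).1 h
    rw [dist_eq_norm] at hz
    have h1 := hnorm t
    nlinarith [norm_nonneg (v - t • e0), norm_nonneg (Ψ v).2, sq_nonneg (v 0 - t)]


lemma lint_prod_core (r : ℝ) (hr : 0 < r) (α : ℝ) (β : E2) :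
    ∫⁻ p in (Set.univ ×ˢ closedBall (0:E2) r),
        ENNReal.ofReal (((p.1 - α)^2 + ‖p.2 - β‖^2)⁻¹)
      ≤ ENNReal.ofReal (Real.pi * (12*r)) * Vb := by
  have hmeas : Measurable fun p : ℝ × E2 => ENNReal.ofReal (((p.1 - α)^2 + ‖p.2 - β‖^2)⁻¹) := by
    apply Measurable.ennreal_ofReal
    apply Measurable.inv
    fun_prop
  rw [Measure.volume_eq_prod, ← Measure.prod_restrict, Measure.restrict_univ]
  rw [MeasureTheory.lintegral_prod_symm _ hmeas.aemeasurable]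
  have hae : ∀ᵐ y ∂(volume.restrict (closedBall (0:E2) r)), y ≠ β := by
    refine Filter.Eventually.filter_mono (ae_mono Measure.restrict_le_self) ?_
    have : volume ({β} : Set E2) = 0 := measure_singleton β
    rw [Filter.eventually_iff, ← Set.compl_setOf (fun y : E2 => y = β)]
    apply compl_mem_ae_iff.2
    simpa [Set.setOf_eq_eq_singleton] using this
  calc ∫⁻ y in closedBall (0:E2) r, ∫⁻ t : ℝ, ENNReal.ofReal (((t - α)^2 + ‖y - β‖^2)⁻¹)
      = ∫⁻ y in closedBall (0:E2) r, ENNReal.ofReal Real.pi * ENNReal.ofReal ‖y - β‖⁻¹ := by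
        refine lintegral_congr_ae (hae.mono fun y hy => ?_)
        simp only []
        rw [lint_one_dim ‖y - β‖ (by simpa [sub_eq_zero] using hy) α]
        rw [div_eq_mul_inv, ENNReal.ofReal_mul Real.pi_nonneg]
    _ = ENNReal.ofReal Real.pi * ∫⁻ y in closedBall (0:E2) r, ENNReal.ofReal ‖y - β‖⁻¹ := by
        rw [lintegral_const_mul]
        apply Measurable.ennreal_ofReal
        apply Measurable.inv
        fun_prop
    _ ≤ ENNReal.ofReal Real.pi * (ENNReal.ofReal (12*r) * Vb) := by
        gcongr
        exact lint_inv_norm_ball' r hr β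
    _ = ENNReal.ofReal (Real.pi * (12*r)) * Vb := by
        rw [← mul_assoc, ← ENNReal.ofReal_mul Real.pi_nonneg]


lemma Cyl_e0_eq (r : ℝ) : Cyl r e0 = Ψ ⁻¹' (Set.univ ×ˢ closedBall (0:E2) r) := by
  ext v
  simp only [Cyl, Set.mem_setOf_eq, Set.mem_preimage, Set.mem_prod, Set.mem_univ, true_and,
    mem_closedBall, dist_zero_right]
  rw [infDist_line]

lemma key : ∀ r : ℝ, 0 < r → ∀ x : E3, x ≠ 0 → ∀ a : E3,
    ∫⁻ v in Cyl r x, ENNReal.ofReal ((‖v - a‖^2)⁻¹)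
      ≤ (ENNReal.ofReal (12*Real.pi) * Vb) * ENNReal.ofReal r := by
  intro r hr x hx a
  set u : E3 := ‖x‖⁻¹ • x with hu
  have hxn : ‖x‖ ≠ 0 := norm_ne_zero_iff.2 hx
  have hun : ‖u‖ = 1 := by
    rw [hu, norm_smul, norm_inv, norm_norm, inv_mul_cancel₀ hxn]
  have hen : ‖e0‖ = 1 := by
    rw [e0, EuclideanSpace.norm_single]; norm_num
  set f : E3 ≃ₗᵢ[ℝ] E3 := Submodule.reflection (Submodule.span ℝ {u - e0})ᗮ with hf
  have hfu : f u = e0 := Submodule.reflection_sub (hun.trans hen.symm)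
  have hfe : f e0 = u := by
    have := Submodule.reflection_reflection (Submodule.span ℝ {u - e0})ᗮ u
    rw [hfu] at this
    exact this.symm ▸ rfl
  -- the line through x equals the line through u
  have hline : {z : E3 | ∃ t : ℝ, z = t • x} = {z : E3 | ∃ t : ℝ, z = t • u} := by
    ext z
    constructor
    · rintro ⟨t, rfl⟩; exact ⟨t * ‖x‖, by rw [hu, smul_smul, mul_assoc, mul_inv_cancel₀ hxn, mul_one]⟩
    · rintro ⟨t, rfl⟩; exact ⟨t * ‖x‖⁻¹, by rw [hu, smul_smul]⟩
  have himg : ⇑f '' {z : E3 | ∃ t : ℝ, z = t • u} = {z : E3 | ∃ t : ℝ, z = t • e0} := by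
    ext z
    constructor
    · rintro ⟨w, ⟨t, rfl⟩, rfl⟩; exact ⟨t, by rw [_root_.map_smul, hfu]⟩
    · rintro ⟨t, rfl⟩; exact ⟨t • u, ⟨t, rfl⟩, by rw [_root_.map_smul, hfu]⟩
  have hCyl : Cyl r x = ⇑f ⁻¹' (Cyl r e0) := by
    ext v
    simp only [Cyl, Set.mem_setOf_eq, Set.mem_preimage, hline]
    rw [← himg, Metric.infDist_image f.isometry]
  have hfmp : MeasurePreserving (⇑f) volume volume := f.measurePreserving
  have hfemb : MeasurableEmbedding (⇑f) := f.toHomeomorph.measurableEmbedding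
  have step1 : ∫⁻ v in Cyl r x, ENNReal.ofReal ((‖v - a‖^2)⁻¹)
      = ∫⁻ w in Cyl r e0, ENNReal.ofReal ((‖w - f a‖^2)⁻¹) := by
    rw [hCyl]
    rw [← hfmp.setLIntegral_comp_preimage_emb hfemb
      (fun w => ENNReal.ofReal ((‖w - f a‖^2)⁻¹)) (Cyl r e0)]
    refine lintegral_congr fun v => ?_
    rw [← _root_.map_sub, f.norm_map]
  have hΨemb : MeasurableEmbedding (⇑Ψ) := Ψ.measurableEmbedding
  set α : ℝ := (Ψ (f a)).1
  set β : E2 := (Ψ (f a)).2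
  have step2 : ∫⁻ w in Cyl r e0, ENNReal.ofReal ((‖w - f a‖^2)⁻¹)
      = ∫⁻ p in (Set.univ ×ˢ closedBall (0:E2) r),
          ENNReal.ofReal (((p.1 - α)^2 + ‖p.2 - β‖^2)⁻¹) := by
    rw [Cyl_e0_eq]
    rw [← hΨmp.setLIntegral_comp_preimage_emb hΨemb
      (fun p => ENNReal.ofReal (((p.1 - α)^2 + ‖p.2 - β‖^2)⁻¹)) _]
    refine lintegral_congr fun w => ?_
    have hsub1 : (Ψ (w - f a)).1 = (Ψ w).1 - (Ψ (f a)).1 := rfl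
    have hsub2 : (Ψ (w - f a)).2 = (Ψ w).2 - (Ψ (f a)).2 := rfl
    congr 2
    rw [norm_decomp]
  rw [step1, step2]
  calc ∫⁻ p in (Set.univ ×ˢ closedBall (0:E2) r),
          ENNReal.ofReal (((p.1 - α)^2 + ‖p.2 - β‖^2)⁻¹)
      ≤ ENNReal.ofReal (Real.pi * (12*r)) * Vb := lint_prod_core r hr α β
    _ = (ENNReal.ofReal (12*Real.pi) * Vb) * ENNReal.ofReal r := by
        rw [show Real.pi * (12*r) = (12*Real.pi)*r by ring,
          ENNReal.ofReal_mul (by positivity)]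
        ring


/-- There is a universal constant `C > 0` such that for every `r > 0`, every `x ≠ 0` and
all `a, b ∈ ℝ³`, the function `v ↦ 1/(‖v−a‖‖v−b‖)` is integrable on the cylinder
`Cyl_r(x)` and its integral there is at most `C r`. -/
theorem cylinder_double_singular_integral :
    ∃ C : ℝ, 0 < C ∧ ∀ r : ℝ, 0 < r → ∀ x : E3, x ≠ 0 → ∀ a b : E3,
      IntegrableOn (fun v : E3 => 1 / (‖v - a‖ * ‖v - b‖)) (Cyl r x) ∧
      (∫ v in Cyl r x, 1 / (‖v - a‖ * ‖v - b‖)) ≤ C * r := by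
  set K : ℝ≥0∞ := ENNReal.ofReal (12*Real.pi) * Vb with hK
  have hKne : K ≠ ⊤ := ENNReal.mul_ne_top ENNReal.ofReal_ne_top hVb_ne_top
  have h2Kne : 2 * K ≠ ⊤ := ENNReal.mul_ne_top (by norm_num) hKne
  refine ⟨max 1 (2*K).toReal, lt_of_lt_of_le one_pos (le_max_left _ _), ?_⟩
  intro r hr x hx a b
  set G : E3 → ℝ := fun v => 1 / (‖v - a‖ * ‖v - b‖) with hG
  have hGmeas : Measurable G := by
    simp only [hG, one_div]
    apply Measurable.inv
    fun_prop
  have hGnn : ∀ v, 0 ≤ G v := fun v => by positivity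
  have hpt : ∀ v : E3, ENNReal.ofReal (G v)
      ≤ ENNReal.ofReal ((‖v - a‖^2)⁻¹) + ENNReal.ofReal ((‖v - b‖^2)⁻¹) := by
    intro v
    refine le_trans (ENNReal.ofReal_le_ofReal ?_) ENNReal.ofReal_add_le
    have hs : (0:ℝ) ≤ ‖v - a‖ := norm_nonneg _
    have ht : (0:ℝ) ≤ ‖v - b‖ := norm_nonneg _
    have hGv : G v = 1 / (‖v - a‖ * ‖v - b‖) := rfl
    rcases eq_or_lt_of_le hs with h | h
    · have h0 : G v = 0 := by rw [hGv, ← h, zero_mul, _root_.div_zero]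
      rw [h0]; positivity
    rcases eq_or_lt_of_le ht with h' | h'
    · have h0 : G v = 0 := by rw [hGv, ← h', mul_zero, _root_.div_zero]
      rw [h0]; positivity
    rw [hGv, ← one_div, ← one_div, div_add_div _ _ (by positivity) (by positivity),
      div_le_div_iff₀ (by positivity) (by positivity)]
    nlinarith [mul_pos h h', sq_nonneg (‖v - a‖ - ‖v - b‖), sq_nonneg (‖v - a‖ * ‖v - b‖),
      mul_nonneg (mul_pos h h').le (sq_nonneg (‖v - a‖ - ‖v - b‖))]
  have hmeas_a : Measurable fun v : E3 => ENNReal.ofReal ((‖v - a‖^2)⁻¹) := by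
    apply Measurable.ennreal_ofReal; apply Measurable.inv; fun_prop
  have hmeas_b : Measurable fun v : E3 => ENNReal.ofReal ((‖v - b‖^2)⁻¹) := by
    apply Measurable.ennreal_ofReal; apply Measurable.inv; fun_prop
  have hlint : ∫⁻ v in Cyl r x, ENNReal.ofReal (G v) ≤ 2 * K * ENNReal.ofReal r := by
    calc ∫⁻ v in Cyl r x, ENNReal.ofReal (G v)
        ≤ ∫⁻ v in Cyl r x,
            (ENNReal.ofReal ((‖v - a‖^2)⁻¹) + ENNReal.ofReal ((‖v - b‖^2)⁻¹)) :=
          lintegral_mono hpt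
      _ = (∫⁻ v in Cyl r x, ENNReal.ofReal ((‖v - a‖^2)⁻¹))
          + ∫⁻ v in Cyl r x, ENNReal.ofReal ((‖v - b‖^2)⁻¹) :=
          lintegral_add_left hmeas_a _
      _ ≤ K * ENNReal.ofReal r + K * ENNReal.ofReal r :=
          add_le_add (key r hr x hx a) (key r hr x hx b)
      _ = 2 * K * ENNReal.ofReal r := by ring
  have hfin : (∫⁻ v in Cyl r x, ENNReal.ofReal (G v)) < ⊤ :=
    lt_of_le_of_lt hlint (ENNReal.mul_lt_top h2Kne.lt_top ENNReal.ofReal_lt_top)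
  have hint : IntegrableOn G (Cyl r x) := by
    refine ⟨hGmeas.aestronglyMeasurable.restrict, ?_⟩
    rw [hasFiniteIntegral_iff_norm]
    have hnn : ∀ v, ENNReal.ofReal ‖G v‖ = ENNReal.ofReal (G v) := fun v => by
      rw [Real.norm_eq_abs, abs_of_nonneg (hGnn v)]
    simp_rw [hnn]
    exact hfin
  refine ⟨hint, ?_⟩
  rw [integral_eq_lintegral_of_nonneg_ae (ae_of_all _ hGnn) hGmeas.aestronglyMeasurable.restrict]
  have hle := ENNReal.toReal_mono
    (ENNReal.mul_ne_top h2Kne ENNReal.ofReal_ne_top) hlint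
  rw [ENNReal.toReal_mul, ENNReal.toReal_ofReal hr.le] at hle
  calc (∫⁻ v in Cyl r x, ENNReal.ofReal (G v)).toReal ≤ (2*K).toReal * r := hle
    _ ≤ max 1 (2*K).toReal * r := by
        apply mul_le_mul_of_nonneg_right (le_max_right _ _) hr.le
end
end
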